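/- arXiv:2404.07281 — 9 statements merged into one kernel-verified Lean document; each statement's English description precedes it below -/
import Mathlib

section
/- Let d ≥ 1, let ψ ∈ ℂ^d be a unit vector, let τ ≥ 1, and let L be a Hermitian d×d matrix with 0 ⪯ L ⪯ I, Lψ = ψ, and ⟨v, Lv⟩ ≤ (1 − 1/τ)·‖v‖² for every vector v orthogonal to ψ. Then for every positive semidefinite d×d matrix ρ with Tr(ρ) = 1 and every ε ≥ 0: (i) if Tr(Lρ) ≥ 1 − ε then ⟨ψ, ρψ⟩ ≥ 1 − τε; (ii) Tr(Lρ) ≥ ⟨ψ, ρψ⟩, so in particular if ⟨ψ, ρψ⟩ ≥ 1 − ε then Tr(Lρ) ≥ 1 − ε. -/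
open Matrix Complex
open scoped ComplexOrder

-- Hermitian quadratic form is self-conjugate
lemma herm_dot_selfconj {d : ℕ} (M : Matrix (Fin d) (Fin d) ℂ) (hM : M.IsHermitian)
    (x : Fin d → ℂ) : star (star x ⬝ᵥ (M *ᵥ x)) = star x ⬝ᵥ (M *ᵥ x) := by
  rw [← star_dotProduct, star_mulVec, hM.eq, dotProduct_mulVec]

-- trace of product of PSD matrices has nonneg real part
lemma trace_mul_re_nonneg {d : ℕ} (M ρ : Matrix (Fin d) (Fin d) ℂ)
    (hM : M.PosSemidef) (hρ : ρ.PosSemidef) : 0 ≤ ((M * ρ).trace).re := by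
  obtain ⟨B, hB⟩ : ∃ B : Matrix (Fin d) (Fin d) ℂ, ρ = Bᴴ * B := by
    open scoped MatrixOrder in exact CStarAlgebra.nonneg_iff_eq_star_mul_self.mp hρ.nonneg
  have h1 : (M * ρ).trace = (B * M * Bᴴ).trace := by
    rw [hB, ← mul_assoc, trace_mul_comm, ← mul_assoc]
  have hpsd := hM.mul_mul_conjTranspose_same B
  rw [h1, Matrix.trace, Complex.re_sum]
  apply Finset.sum_nonneg
  intro i _
  have h2 := hpsd.re_dotProduct_nonneg (Pi.single i 1)
  simpa [dotProduct, mulVec, Pi.single_apply, Matrix.diag] using h2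

-- expansion of quadratic form along ψ-decomposition
lemma aux_expand {d : ℕ} (ψ v : Fin d → ℂ) (hψ1 : star ψ ⬝ᵥ ψ = 1) (α : ℂ)
    (M : Matrix (Fin d) (Fin d) ℂ) (hM : M.IsHermitian) (hMψ : M *ᵥ ψ = ψ)
    (hov : star ψ ⬝ᵥ v = 0) :
    star (v + α • ψ) ⬝ᵥ (M *ᵥ (v + α • ψ)) = star v ⬝ᵥ (M *ᵥ v) + star α * α := by
  have h1 : star ψ ᵥ* M = star ψ := by rw [← hM.eq, ← star_mulVec, hMψ]
  have h2 : star ψ ⬝ᵥ (M *ᵥ v) = 0 := by rw [dotProduct_mulVec, h1, hov]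
  have h3 : star v ⬝ᵥ ψ = 0 := by rw [star_dotProduct, hov, star_zero]
  rw [mulVec_add, mulVec_smul, hMψ, star_add, star_smul]
  simp only [add_dotProduct, dotProduct_add, dotProduct_smul, smul_dotProduct,
    smul_eq_mul, h2, h3, hψ1]
  ring

lemma norm_sum_eq {d : ℕ} (u : Fin d → ℂ) :
    (star u ⬝ᵥ u).re = ∑ i, ‖u i‖ ^ 2 := by
  rw [dotProduct, Complex.re_sum]
  refine Finset.sum_congr rfl fun i _ => ?_
  have : star (u i) * u i = ((‖u i‖ ^ 2 : ℝ) : ℂ) := by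
    rw [← Complex.normSq_eq_norm_sq, Complex.normSq_eq_conj_mul_self]; rfl
  rw [Pi.star_apply, this, Complex.ofReal_re]

/-- An approximate projector `L` onto a unit vector `ψ` (Hermitian,
`0 ⪯ L ⪯ I`, `Lψ = ψ`, and `⟨v, Lv⟩ ≤ (1 - 1/τ)‖v‖²` on the orthogonal complement of `ψ`)
certifies fidelity: for any density matrix `ρ` and `ε ≥ 0`,
(i) `Tr(Lρ) ≥ 1 - ε` implies `⟨ψ, ρψ⟩ ≥ 1 - τε`, and (ii) `Tr(Lρ) ≥ ⟨ψ, ρψ⟩`. -/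
theorem stmt_0 (d : ℕ) (hd : 1 ≤ d)
    (ψ : Fin d → ℂ) (hψ : ∑ i, ‖ψ i‖ ^ 2 = 1)
    (τ : ℝ) (hτ : 1 ≤ τ)
    (L : Matrix (Fin d) (Fin d) ℂ)
    (hLherm : L.IsHermitian)
    (hL0 : L.PosSemidef)
    (hL1 : (1 - L).PosSemidef)
    (hLψ : L *ᵥ ψ = ψ)
    (hgap : ∀ v : Fin d → ℂ, star ψ ⬝ᵥ v = 0 →
      (star v ⬝ᵥ (L *ᵥ v)).re ≤ (1 - 1 / τ) * ∑ i, ‖v i‖ ^ 2)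
    (ρ : Matrix (Fin d) (Fin d) ℂ) (hρ : ρ.PosSemidef) (hρtr : ρ.trace = 1)
    (ε : ℝ) (hε : 0 ≤ ε) :
    ((1 - ε ≤ (L * ρ).trace.re → 1 - τ * ε ≤ (star ψ ⬝ᵥ (ρ *ᵥ ψ)).re) ∧
      (star ψ ⬝ᵥ (ρ *ᵥ ψ)).re ≤ (L * ρ).trace.re) := by
  have hτ0 : 0 < τ := lt_of_lt_of_le one_pos hτ
  have hψ1 : star ψ ⬝ᵥ ψ = 1 := by
    have := norm_sum_eq ψ
    rw [hψ] at this
    have him : (star ψ ⬝ᵥ ψ).im = 0 := by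
      have := herm_dot_selfconj (1 : Matrix (Fin d) (Fin d) ℂ) Matrix.isHermitian_one ψ
      rw [one_mulVec] at this
      exact Complex.conj_eq_iff_im.mp this
    exact Complex.ext this him
  -- the projector
  set P : Matrix (Fin d) (Fin d) ℂ := vecMulVec ψ (star ψ) with hPdef
  have hPherm : P.IsHermitian := by
    ext i j
    simp [hPdef, vecMulVec_apply, conjTranspose_apply, mul_comm]
  have hPm : ∀ w, P *ᵥ w = (star ψ ⬝ᵥ w) • ψ := by
    intro w
    ext i
    simp only [hPdef, vecMulVec_apply, mulVec, dotProduct, Pi.smul_apply, smul_eq_mul,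
      Pi.star_apply]
    rw [Finset.sum_mul]
    exact Finset.sum_congr rfl fun j _ => by ring
  have hPq : ∀ w, star w ⬝ᵥ (P *ᵥ w) = star (star ψ ⬝ᵥ w) * (star ψ ⬝ᵥ w) := by
    intro w
    rw [hPm, dotProduct_smul, smul_eq_mul,
      show star w ⬝ᵥ ψ = star (star ψ ⬝ᵥ w) from star_dotProduct w ψ]
    ring
  have hPψ : P *ᵥ ψ = ψ := by rw [hPm, hψ1, one_smul]
  -- decomposition facts
  have hdec : ∀ w : Fin d → ℂ, star ψ ⬝ᵥ (w - (star ψ ⬝ᵥ w) • ψ) = 0 := by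
    intro w
    rw [dotProduct_sub, dotProduct_smul, hψ1, smul_eq_mul, mul_one, sub_self]
  -- L - P is PSD
  have hLP : (L - P).PosSemidef := by
    refine Matrix.PosSemidef.of_dotProduct_mulVec_nonneg (hLherm.sub hPherm) fun w => ?_
    set α := star ψ ⬝ᵥ w with hα
    set v := w - α • ψ with hv
    have hw : w = v + α • ψ := by rw [hv]; ring_nf
    have hov : star ψ ⬝ᵥ v = 0 := hdec w
    have hq : star w ⬝ᵥ ((L - P) *ᵥ w) = star v ⬝ᵥ (L *ᵥ v) := by
      rw [sub_mulVec, dotProduct_sub, hw,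
        aux_expand ψ v hψ1 α L hLherm hLψ hov,
        aux_expand ψ v hψ1 α P hPherm hPψ hov, hPm v, hov, zero_smul,
        dotProduct_zero]
      ring
    rw [hq]
    exact hL0.dotProduct_mulVec_nonneg v
  -- (1 - 1/τ) • 1 + (1/τ) • P - L is PSD
  set U : Matrix (Fin d) (Fin d) ℂ :=
    (1 - 1 / τ) • (1 : Matrix (Fin d) (Fin d) ℂ) + (1 / τ) • P - L with hUdef
  have hUherm : U.IsHermitian := by
    have h1 : ((1 - 1 / τ) • (1 : Matrix (Fin d) (Fin d) ℂ)).IsHermitian := by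
      unfold Matrix.IsHermitian
      rw [conjTranspose_smul, star_trivial, Matrix.isHermitian_one.eq]
    have h2 : ((1 / τ) • P).IsHermitian := by
      unfold Matrix.IsHermitian
      rw [conjTranspose_smul, star_trivial, hPherm.eq]
    exact (h1.add h2).sub hLherm
  have hU : U.PosSemidef := by
    refine Matrix.PosSemidef.of_dotProduct_mulVec_nonneg hUherm fun w => ?_
    set α := star ψ ⬝ᵥ w with hα
    set v := w - α • ψ with hv
    have hw : w = v + α • ψ := by rw [hv]; ring_nf
    have hov : star ψ ⬝ᵥ v = 0 := hdec w
    have hq : star w ⬝ᵥ (U *ᵥ w) =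
        ((1 - 1 / τ : ℝ) : ℂ) * (star v ⬝ᵥ v) - star v ⬝ᵥ (L *ᵥ v) := by
      have e1 : star (v + α • ψ) ⬝ᵥ (v + α • ψ) = star v ⬝ᵥ v + star α * α := by
        have h := aux_expand ψ v hψ1 α (1 : Matrix (Fin d) (Fin d) ℂ)
          Matrix.isHermitian_one (by rw [one_mulVec]) hov
        rwa [one_mulVec, one_mulVec] at h
      rw [hUdef, sub_mulVec, add_mulVec, smul_mulVec, smul_mulVec,
        one_mulVec, dotProduct_sub, dotProduct_add, dotProduct_smul, dotProduct_smul,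
        hw, e1, aux_expand ψ v hψ1 α L hLherm hLψ hov,
        aux_expand ψ v hψ1 α P hPherm hPψ hov, hPm v, hov, zero_smul, dotProduct_zero]
      simp only [Complex.real_smul]
      push_cast
      ring
    rw [hq]
    have him : (star v ⬝ᵥ (L *ᵥ v)).im = 0 :=
      Complex.conj_eq_iff_im.mp (herm_dot_selfconj L hLherm v)
    have himv : (star v ⬝ᵥ v).im = 0 := by
      have := herm_dot_selfconj (1 : Matrix (Fin d) (Fin d) ℂ) Matrix.isHermitian_one v
      rw [one_mulVec] at this
      exact Complex.conj_eq_iff_im.mp this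
    have hre := hgap v hov
    rw [← norm_sum_eq v] at hre
    rw [Complex.le_def]
    constructor
    · simp only [Complex.sub_re, Complex.zero_re, Complex.mul_re, Complex.ofReal_re,
        Complex.ofReal_im, himv, him, mul_zero, zero_mul, sub_zero]
      linarith
    · simp [Complex.sub_im, Complex.mul_im, Complex.ofReal_re, Complex.ofReal_im,
        himv, him]
  -- trace computations
  have hPtr : (P * ρ).trace = star ψ ⬝ᵥ (ρ *ᵥ ψ) := by
    rw [Matrix.trace]
    simp only [Matrix.diag, mul_apply, hPdef, vecMulVec_apply, dotProduct, mulVec,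
      Pi.star_apply]
    rw [Finset.sum_comm]
    refine Finset.sum_congr rfl fun j _ => ?_
    rw [Finset.mul_sum]
    refine Finset.sum_congr rfl fun i _ => by ring
  have key1 := trace_mul_re_nonneg (L - P) ρ hLP hρ
  have key2 := trace_mul_re_nonneg U ρ hU hρ
  have htr1 : ((L - P) * ρ).trace.re = (L * ρ).trace.re - (star ψ ⬝ᵥ (ρ *ᵥ ψ)).re := by
    rw [sub_mul, trace_sub, Complex.sub_re, hPtr]
  have htrU : (U * ρ).trace.re =
      (1 - 1 / τ) + (1 / τ) * (star ψ ⬝ᵥ (ρ *ᵥ ψ)).re - (L * ρ).trace.re := by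
    rw [hUdef, sub_mul, add_mul, smul_mul_assoc, smul_mul_assoc, one_mul,
      trace_sub, trace_add, trace_smul, trace_smul, hρtr, hPtr]
    simp [Complex.smul_re]
  rw [htr1] at key1
  rw [htrU] at key2
  have hτne : τ ≠ 0 := ne_of_gt hτ0
  constructor
  · intro h
    have h2 : 1 - ε ≤ 1 - 1 / τ + 1 / τ * (star ψ ⬝ᵥ (ρ *ᵥ ψ)).re := by linarith
    have h3 : τ * (1 - ε) ≤ τ * (1 - 1 / τ + 1 / τ * (star ψ ⬝ᵥ (ρ *ᵥ ψ)).re) :=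
      mul_le_mul_of_nonneg_left h2 hτ0.le
    have h4 : τ * (1 - 1 / τ + 1 / τ * (star ψ ⬝ᵥ (ρ *ᵥ ψ)).re)
        = τ - 1 + (star ψ ⬝ᵥ (ρ *ᵥ ψ)).re := by
      field_simp
    nlinarith
  · linarith
end

section
/- Let π be a strictly positive probability distribution on {0,1}^n, let φ : {0,1}^n → ℝ, and define ψ ∈ ℂ^{{0,1}^n} by ψ(x) = √π(x)·e^{iφ(x)}. Fix 1 ≤ m ≤ n and set N = ∑_{k=1}^m C(n,k). Define the matrix L indexed by {0,1}^n × {0,1}^n by: L(x,y) = (1/N)·(√(π(x)π(y))/(π(x)+π(y)))·e^{i(φ(x)−φ(y))} whenever 1 ≤ d(x,y) ≤ m; L(x,x) = (1/N)·∑_{x' : 1 ≤ d(x,x') ≤ m} π(x)/(π(x)+π(x')); and L(x,y) = 0 whenever d(x,y) > m. Then L is Hermitian and Lψ = ψ. -/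
open Matrix Complex Finset

lemma card_hamming_sphere (n k : ℕ) (x : Fin n → Bool) :
    ({y | hammingDist x y = k} : Finset (Fin n → Bool)).card = n.choose k := by
  have h : n.choose k = (Finset.powersetCard k (Finset.univ : Finset (Fin n))).card := by
    rw [Finset.card_powersetCard, Finset.card_univ, Fintype.card_fin]
  rw [h]
  apply Finset.card_nbij' (i := fun y => ({i | x i ≠ y i} : Finset (Fin n)))
    (j := fun s i => if i ∈ s then !x i else x i)
  · intro y hy
    simp only [Finset.mem_coe, Finset.mem_filter, Finset.mem_univ, true_and] at hy
    simp [Finset.mem_powersetCard, ← hy, hammingDist]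
  · intro s hs
    simp only [Finset.mem_coe, Finset.mem_powersetCard] at hs
    simp only [Finset.mem_coe, Finset.mem_filter, Finset.mem_univ, true_and, ← hs.2, hammingDist]
    congr 1
    ext i
    by_cases h : i ∈ s <;> simp [h]
  · intro y _
    funext i
    by_cases h : x i = y i <;> simp only [Finset.mem_filter, Finset.mem_univ, true_and, h,
      ne_eq, not_true, if_false, if_true, ite_not]
    · revert h; cases x i <;> cases y i <;> simp
  · intro s _
    ext i
    by_cases h : i ∈ s <;> simp [h]

lemma card_hamming_ball (n m : ℕ) (x : Fin n → Bool) :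
    ({y | 1 ≤ hammingDist x y ∧ hammingDist x y ≤ m} : Finset (Fin n → Bool)).card
      = ∑ k ∈ Finset.Icc 1 m, n.choose k := by
  rw [Finset.card_eq_sum_card_fiberwise (f := fun y => hammingDist x y)
    (t := Finset.Icc 1 m) (fun y hy => by
      simp only [Finset.mem_coe, Finset.mem_filter] at hy
      exact Finset.mem_Icc.mpr ⟨hy.2.1, hy.2.2⟩)]
  refine Finset.sum_congr rfl fun k hk => ?_
  rw [← card_hamming_sphere n k x]
  congr 1
  rw [Finset.filter_filter]
  refine Finset.filter_congr fun y _ => ?_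
  simp only [Finset.mem_Icc] at hk
  constructor
  · rintro ⟨_, h⟩; exact h
  · rintro h; exact ⟨⟨h ▸ hk.1, h ▸ hk.2⟩, h⟩

/-- The level-`m` shadow-overlap observable `L` associated with the
state `ψ(x) = √π(x) e^{iφ(x)}` is Hermitian and fixes `ψ`. -/
theorem stmt_1 (n m : ℕ) (hm1 : 1 ≤ m) (hmn : m ≤ n)
    (π : (Fin n → Bool) → ℝ) (hπpos : ∀ x, 0 < π x) (hπsum : ∑ x, π x = 1)
    (φ : (Fin n → Bool) → ℝ)
    (ψ : (Fin n → Bool) → ℂ)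
    (hψ : ∀ x, ψ x = (Real.sqrt (π x) : ℝ) * Complex.exp (Complex.I * (φ x : ℝ)))
    (N : ℝ) (hN : N = ∑ k ∈ Finset.Icc 1 m, (Nat.choose n k : ℝ))
    (L : Matrix (Fin n → Bool) (Fin n → Bool) ℂ)
    (hLoff : ∀ x y, 1 ≤ hammingDist x y → hammingDist x y ≤ m →
      L x y = ((1 / N * (Real.sqrt (π x * π y) / (π x + π y)) : ℝ) : ℂ) *
        Complex.exp (Complex.I * ((φ x - φ y : ℝ) : ℂ)))
    (hLdiag : ∀ x, L x x = ((1 / N *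
      ∑ x' ∈ Finset.univ.filter
        (fun x' => 1 ≤ hammingDist x x' ∧ hammingDist x x' ≤ m),
          π x / (π x + π x') : ℝ) : ℂ))
    (hLfar : ∀ x y, m < hammingDist x y → L x y = 0) :
    L.IsHermitian ∧ L *ᵥ ψ = ψ := by
  have hN0 : 0 < N := by
    rw [hN]
    refine Finset.sum_pos (fun k hk => ?_) ⟨1, Finset.mem_Icc.mpr ⟨le_refl 1, hm1⟩⟩
    exact_mod_cast Nat.choose_pos (le_trans (Finset.mem_Icc.mp hk).2 hmn)
  constructor
  · -- Hermitian
    rw [Matrix.IsHermitian]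
    ext x y
    rw [Matrix.conjTranspose_apply]
    by_cases hxy : y = x
    · subst hxy
      rw [hLdiag]
      simp [Complex.star_def, Complex.conj_ofReal]
    · have hd1 : 1 ≤ hammingDist x y := hammingDist_pos.mpr (fun h => hxy h.symm)
      have hd1' : 1 ≤ hammingDist y x := by rwa [hammingDist_comm]
      by_cases hdm : hammingDist x y ≤ m
      · rw [hLoff y x hd1' (by rwa [hammingDist_comm]), hLoff x y hd1 hdm]
        rw [star_mul', Complex.star_def, Complex.conj_ofReal, ← Complex.exp_conj]
        rw [show (starRingEnd ℂ) (Complex.I * ((φ y - φ x : ℝ) : ℂ))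
            = Complex.I * ((φ x - φ y : ℝ) : ℂ) from by
          rw [_root_.map_mul, Complex.conj_I, Complex.conj_ofReal]; push_cast; ring]
        rw [mul_comm (π y) (π x), add_comm (π y) (π x)]
      · rw [hLfar x y (not_le.mp hdm),
          hLfar y x (by rw [hammingDist_comm]; exact not_le.mp hdm)]
        simp
  · -- L ψ = ψ
    funext x
    rw [Matrix.mulVec, dotProduct]
    set S : Finset (Fin n → Bool) :=
      Finset.univ.filter (fun y => 1 ≤ hammingDist x y ∧ hammingDist x y ≤ m) with hS
    have hxS : x ∉ S := by simp [hS, hammingDist_self]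
    have hsplit : ∑ y, L x y * ψ y = ∑ y ∈ insert x S, L x y * ψ y := by
      refine (Finset.sum_subset (Finset.subset_univ _) fun y _ hy => ?_).symm
      simp only [Finset.mem_insert, hS, Finset.mem_filter, Finset.mem_univ, true_and,
        not_or, not_and, not_le] at hy
      have h1 : 1 ≤ hammingDist x y := hammingDist_pos.mpr (fun h => hy.1 h.symm)
      rw [hLfar x y (hy.2 h1), zero_mul]
    rw [hsplit, Finset.sum_insert hxS]
    have key : ∀ y ∈ S, L x y * ψ y = ((1 / N * (π y / (π x + π y)) : ℝ) : ℂ) * ψ x := by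
      intro y hy
      simp only [hS, Finset.mem_filter, Finset.mem_univ, true_and] at hy
      rw [hLoff x y hy.1 hy.2, hψ y, hψ x]
      have hexp : Complex.exp (Complex.I * ((φ x - φ y : ℝ) : ℂ)) *
          Complex.exp (Complex.I * (φ y : ℝ)) = Complex.exp (Complex.I * (φ x : ℝ)) := by
        rw [← Complex.exp_add]
        congr 1
        push_cast
        ring
      have hsq : Real.sqrt (π x * π y) * Real.sqrt (π y) = Real.sqrt (π x) * π y := by
        rw [Real.sqrt_mul (hπpos x).le, mul_assoc, Real.mul_self_sqrt (hπpos y).le]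
      have hp : π x + π y ≠ 0 :=
        ne_of_gt (by have := hπpos x; have := hπpos y; linarith)
      have hr : (1 / N * (Real.sqrt (π x * π y) / (π x + π y))) * Real.sqrt (π y)
          = 1 / N * (π y / (π x + π y)) * Real.sqrt (π x) := by
        field_simp
        linear_combination hsq
      calc ((1 / N * (Real.sqrt (π x * π y) / (π x + π y)) : ℝ) : ℂ) *
            Complex.exp (Complex.I * ((φ x - φ y : ℝ) : ℂ)) *
            (((Real.sqrt (π y) : ℝ) : ℂ) * Complex.exp (Complex.I * (φ y : ℝ)))
          = (((1 / N * (Real.sqrt (π x * π y) / (π x + π y))) * Real.sqrt (π y) : ℝ) : ℂ) *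
            (Complex.exp (Complex.I * ((φ x - φ y : ℝ) : ℂ)) *
             Complex.exp (Complex.I * (φ y : ℝ))) := by push_cast; ring
        _ = ((1 / N * (π y / (π x + π y)) * Real.sqrt (π x) : ℝ) : ℂ) *
            Complex.exp (Complex.I * (φ x : ℝ)) := by rw [hr, hexp]
        _ = _ := by push_cast; ring
    rw [Finset.sum_congr rfl key, hLdiag x, ← hS]
    rw [← Finset.sum_mul]
    have hcard : (S.card : ℝ) = N := by
      rw [hN, hS, card_hamming_ball n m x]
      push_cast
      rfl
    have hreal : (1 / N * ∑ x' ∈ S, π x / (π x + π x'))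
        + ∑ y ∈ S, 1 / N * (π y / (π x + π y)) = 1 := by
      rw [← Finset.mul_sum, ← mul_add, ← Finset.sum_add_distrib]
      have : ∑ y ∈ S, (π x / (π x + π y) + π y / (π x + π y)) = S.card := by
        rw [Finset.sum_congr rfl fun y _ => ?_]
        · rw [Finset.sum_const, nsmul_eq_mul, mul_one]
        · rw [← add_div,
            div_self (ne_of_gt (by have := hπpos x; have := hπpos y; linarith))]
      rw [this, hcard]
      field_simp
    calc ((1 / N * ∑ x' ∈ S, π x / (π x + π x' ) : ℝ) : ℂ) * ψ x
          + (∑ y ∈ S, ((1 / N * (π y / (π x + π y)) : ℝ) : ℂ)) * ψ x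
        = (((1 / N * ∑ x' ∈ S, π x / (π x + π x'))
            + ∑ y ∈ S, 1 / N * (π y / (π x + π y)) : ℝ) : ℂ) * ψ x := by push_cast; ring
      _ = ψ x := by rw [hreal]; simp
end

section
/- For every n ≥ 1 and every pair of distinct vertices x, y ∈ {0,1}^n of the n-dimensional Boolean hypercube, there exist n simple paths from x to y in the hypercube that are pairwise internally disjoint (no two of them share any vertex except the endpoints x and y), and each of these paths has length at most n + 1. -/
open SimpleGraph Finset

/-- The `n`-dimensional Boolean hypercube graph: vertices are bit strings of
length `n`, adjacent iff they differ in exactly one bit. -/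
def cubeGraph (n : ℕ) : SimpleGraph (Fin n → Bool) where
  Adj x y := hammingDist x y = 1
  symm := by
    constructor
    intro x y h
    rwa [hammingDist_comm]
  loopless := by
    constructor
    intro x h
    simp [hammingDist_self] at h

namespace CubeAux

variable {n : ℕ}

def vtx (T : Finset (Fin n)) : Fin n → Bool := fun j => decide (j ∈ T)

lemma vtx_inj : Function.Injective (vtx (n := n)) := by
  intro A B h
  ext j
  have := congrFun h j
  simpa [vtx, decide_eq_decide] using this

lemma adj_vtx_insert {T : Finset (Fin n)} {j : Fin n} (hj : j ∉ T) :
    (cubeGraph n).Adj (vtx T) (vtx (insert j T)) := by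
  show hammingDist _ _ = 1
  rw [hammingDist]
  rw [show (Finset.filter (fun i => vtx T i ≠ vtx (insert j T) i) Finset.univ) = {j} from ?_]
  · exact Finset.card_singleton j
  ext a
  simp only [Finset.mem_filter, Finset.mem_univ, true_and, Finset.mem_singleton, vtx,
    Finset.mem_insert, ne_eq, decide_eq_decide]
  constructor
  · intro h
    by_contra ha
    exact h (by tauto)
  · rintro rfl
    simp [hj]

variable {V : Type*} {G : SimpleGraph V}

def chainWalk (f : ℕ → V) : ∀ m : ℕ, (∀ t, t < m → G.Adj (f t) (f (t+1))) → G.Walk (f 0) (f m)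
  | 0, _ => Walk.nil
  | m+1, h => (chainWalk f m (fun t ht => h t (Nat.lt_succ_of_lt ht))).concat (h m (Nat.lt_succ_self m))

lemma chainWalk_length (f : ℕ → V) (m : ℕ) (h : ∀ t, t < m → G.Adj (f t) (f (t+1))) :
    (chainWalk f m h).length = m := by
  induction m with
  | zero => rfl
  | succ m ih => rw [chainWalk, Walk.length_concat, ih]

lemma chainWalk_support (f : ℕ → V) (m : ℕ) (h : ∀ t, t < m → G.Adj (f t) (f (t+1))) :
    (chainWalk f m h).support = (List.range (m+1)).map f := by
  induction m with
  | zero => rfl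
  | succ m ih =>
      rw [chainWalk, Walk.support_concat, ih, List.range_succ (n := m+1)]
      simp [List.concat_eq_append]

lemma chainWalk_mem_support (f : ℕ → V) (m : ℕ) (h : ∀ t, t < m → G.Adj (f t) (f (t+1)))
    (v : V) : v ∈ (chainWalk f m h).support ↔ ∃ t, t ≤ m ∧ v = f t := by
  rw [chainWalk_support]
  simp only [List.mem_map, List.mem_range, Nat.lt_succ_iff]
  constructor
  · rintro ⟨t, ht, rfl⟩; exact ⟨t, ht, rfl⟩
  · rintro ⟨t, ht, rfl⟩; exact ⟨t, ht, rfl⟩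

lemma chainWalk_isPath (f : ℕ → V) (m : ℕ) (h : ∀ t, t < m → G.Adj (f t) (f (t+1)))
    (hinj : ∀ s t, s ≤ m → t ≤ m → f s = f t → s = t) : (chainWalk f m h).IsPath := by
  rw [Walk.isPath_def, chainWalk_support]
  refine List.Nodup.map_on ?_ List.nodup_range
  intro s hs t ht hst
  exact hinj s t (Nat.lt_succ_iff.mp (List.mem_range.mp hs))
    (Nat.lt_succ_iff.mp (List.mem_range.mp ht)) hst

lemma vtx_def (T : Finset (Fin n)) : vtx T = fun j => decide (j ∈ T) := rfl

variable {n : ℕ}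

def gfun (S : Finset (Fin n)) (hd : 0 < S.card) (m : ℕ) : Fin n :=
  (S.orderIsoOfFin rfl ⟨m % S.card, Nat.mod_lt m hd⟩ : Fin n)

lemma gfun_mem (S : Finset (Fin n)) (hd : 0 < S.card) (m : ℕ) : gfun S hd m ∈ S :=
  (S.orderIsoOfFin rfl ⟨m % S.card, Nat.mod_lt m hd⟩).2

lemma gfun_eq_iff (S : Finset (Fin n)) (hd : 0 < S.card) {a b : ℕ} :
    gfun S hd a = gfun S hd b ↔ a % S.card = b % S.card := by
  constructor
  · intro h
    have h2 := (S.orderIsoOfFin rfl).injective (Subtype.ext h)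
    exact congrArg Fin.val h2
  · intro h
    exact congrArg (fun m : Fin S.card => ((S.orderIsoOfFin rfl) m : Fin n)) (Fin.ext h)

def Wk (S : Finset (Fin n)) (hd : 0 < S.card) (k t : ℕ) : Finset (Fin n) :=
  (range t).image (fun a => gfun S hd (k + a))

lemma Wk_zero (S : Finset (Fin n)) (hd : 0 < S.card) (k : ℕ) : Wk S hd k 0 = ∅ := by
  simp [Wk]

lemma Wk_succ (S : Finset (Fin n)) (hd : 0 < S.card) (k t : ℕ) :
    Wk S hd k (t+1) = insert (gfun S hd (k+t)) (Wk S hd k t) := by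
  rw [Wk, Finset.range_add_one, Finset.image_insert]
  rfl

lemma Wk_subset (S : Finset (Fin n)) (hd : 0 < S.card) (k t : ℕ) : Wk S hd k t ⊆ S := by
  intro a ha
  obtain ⟨b, _, rfl⟩ := Finset.mem_image.mp ha
  exact gfun_mem S hd _

lemma gfun_notin (S : Finset (Fin n)) (hd : 0 < S.card) {k t s : ℕ} (hts : t ≤ s)
    (hs : s < S.card) : gfun S hd (k + s) ∉ Wk S hd k t := by
  intro hmem
  obtain ⟨a, ha, hae⟩ := Finset.mem_image.mp hmem
  rw [Finset.mem_range] at ha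
  rw [gfun_eq_iff] at hae
  have h1 : a % S.card = s % S.card :=
    Nat.ModEq.add_left_cancel' k hae
  rw [Nat.mod_eq_of_lt (lt_of_lt_of_le (lt_of_lt_of_le ha hts) hs.le),
    Nat.mod_eq_of_lt hs] at h1
  omega

lemma Wk_card (S : Finset (Fin n)) (hd : 0 < S.card) {k t : ℕ} (ht : t ≤ S.card) :
    (Wk S hd k t).card = t := by
  rw [Wk, Finset.card_image_of_injOn, Finset.card_range]
  intro a ha b hb hab
  simp only [Finset.coe_range, Set.mem_Iio] at ha hb
  rw [gfun_eq_iff] at hab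
  have h1 : a % S.card = b % S.card := Nat.ModEq.add_left_cancel' k hab
  rw [Nat.mod_eq_of_lt (lt_of_lt_of_le ha ht), Nat.mod_eq_of_lt (lt_of_lt_of_le hb ht)] at h1
  exact h1

lemma Wk_full (S : Finset (Fin n)) (hd : 0 < S.card) (k : ℕ) : Wk S hd k S.card = S :=
  (Finset.eq_of_subset_of_card_le (Wk_subset S hd k S.card)
    (le_of_eq (Wk_card S hd le_rfl).symm)).symm ▸ rfl

lemma Wk_start_unique (S : Finset (Fin n)) (hd : 0 < S.card) {k k' t : ℕ}
    (hk : k < S.card) (hk' : k' < S.card) (ht1 : 1 ≤ t) (ht : t < S.card)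
    (h : Wk S hd k t = Wk S hd k' t) : k = k' := by
  set d := S.card with hdd
  -- g k' ∈ Wk k' t = Wk k t
  have hmem : gfun S hd k' ∈ Wk S hd k t := by
    rw [h]
    exact Finset.mem_image.mpr ⟨0, Finset.mem_range.mpr ht1, by rw [Nat.add_zero]⟩
  obtain ⟨a, ha, hae⟩ := Finset.mem_image.mp hmem
  rw [Finset.mem_range] at ha
  rcases Nat.eq_zero_or_pos a with rfl | hapos
  · rw [gfun_eq_iff, Nat.add_zero, Nat.mod_eq_of_lt hk, Nat.mod_eq_of_lt hk'] at hae
    exact hae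
  · exfalso
    -- g (k + a - 1) ∈ Wk k t = Wk k' t, but g(k+a-1) = g(k' + (d-1)) ∉ Wk k' t
    have hmem2 : gfun S hd (k + (a - 1)) ∈ Wk S hd k' t := by
      rw [← h]
      exact Finset.mem_image.mpr ⟨a - 1, Finset.mem_range.mpr (by omega), rfl⟩
    have heq : gfun S hd (k + (a - 1)) = gfun S hd (k' + (d - 1)) := by
      rw [gfun_eq_iff, ← hdd]
      rw [gfun_eq_iff, ← hdd] at hae
      have : (k + (a - 1)) + 1 ≡ (k' + (d - 1)) + 1 [MOD d] := by
        have e1 : (k + (a - 1)) + 1 = k + a := by omega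
        have e2 : (k' + (d - 1)) + 1 = k' + d := by omega
        rw [e1, e2]
        calc k + a ≡ k' [MOD d] := hae
          _ ≡ k' + d [MOD d] := (Nat.add_mod_right k' d).symm
      exact Nat.ModEq.add_right_cancel' 1 this
    rw [heq] at hmem2
    exact gfun_notin S hd (by omega) (by omega) hmem2


lemma gfun_def (S : Finset (Fin n)) (hd : 0 < S.card) (m : ℕ) :
    gfun S hd m = (S.orderIsoOfFin rfl ⟨m % S.card, Nat.mod_lt m hd⟩ : Fin n) := rfl

set_option maxHeartbeats 1000000 in
lemma main0 (n : ℕ) (z : Fin n → Bool) (hz : z ≠ fun _ => false) :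
    ∃ p : Fin n → (cubeGraph n).Walk (fun _ => false) z,
      (∀ i, (p i).IsPath) ∧ (∀ i, (p i).length ≤ n + 1) ∧
      (∀ i j, i ≠ j → ∀ v, v ∈ (p i).support → v ∈ (p j).support →
        v = (fun _ => false) ∨ v = z) := by
  classical
  set S : Finset (Fin n) := Finset.univ.filter (fun j => z j = true) with hS
  have hmemS : ∀ j, j ∈ S ↔ z j = true := by
    intro j; simp [hS]
  have hd : 0 < S.card := by
    rw [Finset.card_pos]
    by_contra h
    rw [Finset.not_nonempty_iff_eq_empty] at h
    apply hz
    funext j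
    have : j ∉ S := h ▸ Finset.notMem_empty j
    rw [hmemS] at this
    simpa using this
  have hdn : S.card ≤ n := by
    calc S.card ≤ (Finset.univ : Finset (Fin n)).card := Finset.card_le_card (Finset.subset_univ S)
    _ = n := by simp
  have hv0 : vtx (∅ : Finset (Fin n)) = (fun _ => false) := by
    rw [vtx_def]; funext j; simp

  have hvS : vtx S = z := by
    rw [vtx_def]; funext j; simp [hmemS]
  -- P walks
  have adjP : ∀ k t, t < S.card →
      (cubeGraph n).Adj (vtx (Wk S hd k t)) (vtx (Wk S hd k (t+1))) := by
    intro k t ht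
    rw [Wk_succ]
    exact adj_vtx_insert (gfun_notin S hd le_rfl ht)
  let PW : ℕ → (cubeGraph n).Walk (fun _ => false) z := fun k =>
    (chainWalk (fun t => vtx (Wk S hd k t)) S.card (adjP k)).copy
      (by rw [Wk_zero, hv0]) (by rw [Wk_full, hvS])
  have PW_sup : ∀ k v, v ∈ (PW k).support ↔ ∃ t, t ≤ S.card ∧ v = vtx (Wk S hd k t) := by
    intro k v
    rw [Walk.support_copy, chainWalk_mem_support]
  have PW_len : ∀ k, (PW k).length = S.card := by
    intro k
    rw [Walk.length_copy, chainWalk_length]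
  have PW_path : ∀ k, (PW k).IsPath := by
    intro k
    rw [Walk.isPath_copy]
    apply chainWalk_isPath
    intro s t hs ht hst
    have := vtx_inj hst
    have h1 : (Wk S hd k s).card = (Wk S hd k t).card := by rw [this]
    rwa [Wk_card S hd hs, Wk_card S hd ht] at h1
  -- Q walks
  let fQ : Fin n → ℕ → (Fin n → Bool) := fun i t =>
    if t = 0 then vtx ∅ else if t = S.card + 2 then vtx S
    else vtx (insert i (Wk S hd 0 (t-1)))
  have adjQ : ∀ i, i ∉ S → ∀ t, t < S.card + 2 → (cubeGraph n).Adj (fQ i t) (fQ i (t+1)) := by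
    intro i hi t ht
    rcases Nat.eq_zero_or_pos t with rfl | htpos
    · show (cubeGraph n).Adj (vtx ∅) _
      have h1 : fQ i 1 = vtx (insert i (∅ : Finset (Fin n))) := by
        simp only [fQ]
        rw [if_neg (by omega), if_neg (by omega), Wk_zero]
      rw [h1]
      exact adj_vtx_insert (Finset.notMem_empty i)
    rcases Nat.lt_or_ge t (S.card + 1) with htm | hte
    · -- middle step: 1 ≤ t ≤ S.card
      have e1 : fQ i t = vtx (insert i (Wk S hd 0 (t-1))) := by
        simp only [fQ]; rw [if_neg (by omega), if_neg (by omega)]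
      have e2 : fQ i (t+1) = vtx (insert (gfun S hd (0 + (t-1))) (insert i (Wk S hd 0 (t-1)))) := by
        simp only [fQ]; rw [if_neg (by omega), if_neg (by omega)]
        have : t + 1 - 1 = (t-1) + 1 := by omega
        rw [this, Wk_succ, Finset.insert_comm]
      rw [e1, e2]
      apply adj_vtx_insert
      rw [Finset.mem_insert]
      push_neg
      constructor
      · intro h
        exact hi (h ▸ gfun_mem S hd _)
      · exact gfun_notin S hd le_rfl (by omega)
    · -- last step: t = S.card + 1
      have hteq : t = S.card + 1 := by omega
      subst hteq
      have e1 : fQ i (S.card + 1) = vtx (insert i S) := by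
        simp only [fQ]; rw [if_neg (by omega), if_neg (by omega)]
        rw [Nat.add_sub_cancel, Wk_full]
      have e2 : fQ i (S.card + 1 + 1) = vtx S := by
        simp [fQ]
      rw [e1, e2]
      exact ((cubeGraph n).adj_symm (adj_vtx_insert hi))
  let QW : ∀ i, i ∉ S → (cubeGraph n).Walk (fun _ => false) z := fun i hi =>
    (chainWalk (fQ i) (S.card + 2) (adjQ i hi)).copy
      (by simp [fQ, hv0]) (by simp [fQ, hvS])
  have fQ0 : ∀ i, fQ i 0 = vtx ∅ := fun i => by simp [fQ]
  have fQtop : ∀ i, fQ i (S.card + 2) = vtx S := fun i => by simp [fQ]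
  have fQmid : ∀ i t, t ≠ 0 → t ≠ S.card + 2 → fQ i t = vtx (insert i (Wk S hd 0 (t-1))) := by
    intro i t h1 h2
    simp only [fQ]
    rw [if_neg h1, if_neg h2]
  have QW_sup : ∀ i hi v, v ∈ (QW i hi).support ↔ ∃ t, t ≤ S.card + 2 ∧ v = fQ i t := by
    intro i hi v
    rw [Walk.support_copy, chainWalk_mem_support]
  have QW_len : ∀ i hi, (QW i hi).length = S.card + 2 := by
    intro i hi
    rw [Walk.length_copy, chainWalk_length]
  have hWk_not_mem : ∀ (i : Fin n), i ∉ S → ∀ k t, i ∉ Wk S hd k t :=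
    fun i hi k t h => hi (Wk_subset S hd k t h)
  have QW_path : ∀ i hi, (QW i hi).IsPath := by
    intro i hi
    rw [Walk.isPath_copy]
    apply chainWalk_isPath
    intro s t hs ht hst
    -- case analysis
    by_contra hne
    -- wlog not needed: symmetric manual
    have key : ∀ s t, s ≤ S.card + 2 → t ≤ S.card + 2 → (s = 0 ∨ 0 < t) → s ≠ t → fQ i s = fQ i t → False := by
      intro s t hs ht hst0 hne hst
      rcases Nat.eq_zero_or_pos s with rfl | hspos
      · rcases Nat.eq_zero_or_pos t with rfl | htpos
        · exact hne rfl
        · simp only [fQ, if_pos rfl] at hst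
          by_cases ht2 : t = S.card + 2
          · rw [if_neg (by omega), if_pos ht2] at hst
            have := vtx_inj hst
            rw [← this] at hd
            simp at hd
          · rw [if_neg (by omega), if_neg ht2] at hst
            have := vtx_inj hst
            exact (Finset.insert_ne_empty _ _) this.symm
      rcases Nat.eq_zero_or_pos t with rfl | htpos
      · omega
      -- both positive
      by_cases hs2 : s = S.card + 2 <;> by_cases ht2 : t = S.card + 2
      · exact hne (hs2.trans ht2.symm)
      · simp only [fQ, if_neg (by omega : ¬ s = 0), if_pos hs2,
          if_neg (by omega : ¬ t = 0), if_neg ht2] at hst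
        have := vtx_inj hst
        have : i ∈ S := this ▸ Finset.mem_insert_self i _
        exact hi this
      · simp only [fQ, if_neg (by omega : ¬ s = 0), if_neg hs2,
          if_neg (by omega : ¬ t = 0), if_pos ht2] at hst
        have := vtx_inj hst
        have : i ∈ S := this ▸ Finset.mem_insert_self i _
        exact hi this
      · simp only [fQ, if_neg (by omega : ¬ s = 0), if_neg hs2,
          if_neg (by omega : ¬ t = 0), if_neg ht2] at hst
        have hset := vtx_inj hst
        have hW : Wk S hd 0 (s-1) = Wk S hd 0 (t-1) := by
          have h1 : Wk S hd 0 (s-1) = (insert i (Wk S hd 0 (s-1))).erase i :=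
            (Finset.erase_insert (hWk_not_mem i hi 0 (s-1))).symm
          have h2 : Wk S hd 0 (t-1) = (insert i (Wk S hd 0 (t-1))).erase i :=
            (Finset.erase_insert (hWk_not_mem i hi 0 (t-1))).symm
          rw [h1, h2, hset]
        have hc : (Wk S hd 0 (s-1)).card = (Wk S hd 0 (t-1)).card := by rw [hW]
        rw [Wk_card S hd (by omega), Wk_card S hd (by omega)] at hc
        omega
    rcases Nat.eq_zero_or_pos s with rfl | hspos
    · rcases Nat.eq_zero_or_pos t with rfl | htpos
      · exact hne rfl
      · exact key 0 t hs ht (Or.inl rfl) hne hst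
    · rcases Nat.eq_zero_or_pos t with rfl | htpos
      · exact key 0 s ht hs (Or.inl rfl) (fun h => hne h.symm) hst.symm
      · exact key s t hs ht (Or.inr htpos) hne hst
  -- indexing of S
  let idx : ∀ i, i ∈ S → ℕ := fun i hi => ((S.orderIsoOfFin rfl).symm ⟨i, hi⟩ : Fin S.card)
  have idx_lt : ∀ i hi, idx i hi < S.card := fun i hi => ((S.orderIsoOfFin rfl).symm ⟨i, hi⟩).isLt
  have gfun_idx : ∀ i hi, gfun S hd (idx i hi) = i := by
    intro i hi
    rw [gfun_def]
    have h1 : (⟨idx i hi % S.card, Nat.mod_lt _ hd⟩ : Fin S.card) =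
        (S.orderIsoOfFin rfl).symm ⟨i, hi⟩ :=
      Fin.ext (Nat.mod_eq_of_lt (idx_lt i hi))
    rw [h1]
    simp
  -- disjointness helpers
  have hPP : ∀ k k', k < S.card → k' < S.card → k ≠ k' → ∀ v : Fin n → Bool,
      (∃ t, t ≤ S.card ∧ v = vtx (Wk S hd k t)) → (∃ t, t ≤ S.card ∧ v = vtx (Wk S hd k' t)) →
      v = (fun _ => false) ∨ v = z := by
    intro k k' hk hk' hkk v h1 h2
    obtain ⟨t, ht, rfl⟩ := h1
    obtain ⟨t', ht', hv'⟩ := h2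
    have hW : Wk S hd k t = Wk S hd k' t' := vtx_inj hv'
    have hcard : t = t' := by
      have := congrArg Finset.card hW
      rwa [Wk_card S hd ht, Wk_card S hd ht'] at this
    subst hcard
    rcases Nat.eq_zero_or_pos t with rfl | htpos
    · left; rw [Wk_zero, hv0]
    rcases ht.lt_or_eq with htlt | rfl
    · exact absurd (Wk_start_unique S hd hk hk' htpos htlt hW) hkk
    · right; rw [Wk_full, hvS]
  have hPQ : ∀ (k : ℕ) (j : Fin n), j ∉ S → ∀ v : Fin n → Bool,
      (∃ t, t ≤ S.card ∧ v = vtx (Wk S hd k t)) → (∃ t, t ≤ S.card + 2 ∧ v = fQ j t) →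
      v = (fun _ => false) ∨ v = z := by
    intro k j hj v h1 h2
    obtain ⟨t, ht, rfl⟩ := h1
    obtain ⟨t', ht', hv'⟩ := h2
    rcases Nat.eq_zero_or_pos t' with rfl | ht'pos
    · left
      rw [fQ0] at hv'
      rw [hv', hv0]
    by_cases ht'2 : t' = S.card + 2
    · right
      subst ht'2
      rw [fQtop] at hv'
      rw [hv', hvS]
    · exfalso
      rw [fQmid j t' (by omega) ht'2] at hv'
      have hset := vtx_inj hv'
      have : j ∈ Wk S hd k t := hset ▸ Finset.mem_insert_self j _
      exact hj (Wk_subset S hd k t this)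
  have hQQ : ∀ (i j : Fin n), i ∉ S → j ∉ S → i ≠ j → ∀ v : Fin n → Bool,
      (∃ t, t ≤ S.card + 2 ∧ v = fQ i t) → (∃ t, t ≤ S.card + 2 ∧ v = fQ j t) →
      v = (fun _ => false) ∨ v = z := by
    intro i j hi hj hij v h1 h2
    obtain ⟨t, ht, rfl⟩ := h1
    obtain ⟨t', ht', hv'⟩ := h2
    rcases Nat.eq_zero_or_pos t with rfl | htpos
    · left; rw [fQ0, hv0]
    by_cases ht2 : t = S.card + 2
    · right
      subst ht2
      rw [fQtop, hvS]
    rcases Nat.eq_zero_or_pos t' with rfl | ht'pos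
    · left
      rw [fQ0] at hv'
      rw [hv', hv0]
    by_cases ht'2 : t' = S.card + 2
    · right
      subst ht'2
      rw [fQtop] at hv'
      rw [hv', hvS]
    · exfalso
      rw [fQmid i t (by omega) ht2, fQmid j t' (by omega) ht'2] at hv'
      have hset := vtx_inj hv'
      have hmem : i ∈ insert j (Wk S hd 0 (t'-1)) := hset ▸ Finset.mem_insert_self i _
      rcases Finset.mem_insert.mp hmem with h | h
      · exact hij h
      · exact hi (Wk_subset S hd 0 (t'-1) h)
  -- assemble
  refine ⟨fun i => if hiS : i ∈ S then PW (idx i hiS) else QW i hiS, ?_, ?_, ?_⟩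
  · intro i
    by_cases hiS : i ∈ S
    · simp only [dif_pos hiS]; exact PW_path _
    · simp only [dif_neg hiS]; exact QW_path i hiS
  · intro i
    by_cases hiS : i ∈ S
    · simp only [dif_pos hiS]; rw [PW_len]; omega
    · simp only [dif_neg hiS]; rw [QW_len i hiS]
      have hSn : S.card < n := by
        have h1 : S ⊂ Finset.univ :=
          Finset.ssubset_univ_iff.mpr (fun h => hiS (by rw [h]; exact Finset.mem_univ i))
        have := Finset.card_lt_card h1
        simpa using this
      omega
  · intro i j hij v hvi hvj
    by_cases hiS : i ∈ S <;> by_cases hjS : j ∈ S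
    · simp only [dif_pos hiS] at hvi
      simp only [dif_pos hjS] at hvj
      refine hPP (idx i hiS) (idx j hjS) (idx_lt i hiS) (idx_lt j hjS) ?_ v
        ((PW_sup _ v).mp hvi) ((PW_sup _ v).mp hvj)
      intro h
      apply hij
      rw [← gfun_idx i hiS, ← gfun_idx j hjS, h]
    · simp only [dif_pos hiS] at hvi
      simp only [dif_neg hjS] at hvj
      exact hPQ (idx i hiS) j hjS v ((PW_sup _ v).mp hvi) ((QW_sup j hjS v).mp hvj)
    · simp only [dif_neg hiS] at hvi
      simp only [dif_pos hjS] at hvj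
      exact hPQ (idx j hjS) i hiS v ((PW_sup _ v).mp hvj) ((QW_sup i hiS v).mp hvi)
    · simp only [dif_neg hiS] at hvi
      simp only [dif_neg hjS] at hvj
      exact hQQ i j hiS hjS hij v ((QW_sup i hiS v).mp hvi) ((QW_sup j hjS v).mp hvj)


def xorHom (x : Fin n → Bool) : cubeGraph n →g cubeGraph n where
  toFun v := fun j => xor (x j) (v j)
  map_rel' := by
    intro a b hab
    show hammingDist _ _ = 1
    have hfe : (Finset.filter (fun j => xor (x j) (a j) ≠ xor (x j) (b j)) Finset.univ) =
        (Finset.filter (fun j => a j ≠ b j) Finset.univ) := by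
      apply Finset.filter_congr
      intro j _
      cases x j <;> simp
    rw [hammingDist, hfe]
    exact hab

lemma xorHom_invol (x v : Fin n → Bool) : xorHom x (xorHom x v) = v := by
  funext j
  show xor (x j) (xor (x j) (v j)) = v j
  cases x j <;> simp

lemma xorHom_inj (x : Fin n → Bool) : Function.Injective (xorHom x) :=
  Function.LeftInverse.injective (g := xorHom x) (xorHom_invol x)

end CubeAux

open CubeAux in
/-- Between any two distinct vertices of the `n`-dimensional hypercube
there are `n` pairwise internally disjoint simple paths, each of length at most `n + 1`. -/
theorem stmt_5 (n : ℕ) (hn : 1 ≤ n) (x y : Fin n → Bool) (hxy : x ≠ y) :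
    ∃ p : Fin n → (cubeGraph n).Walk x y,
      (∀ i, (p i).IsPath) ∧
      (∀ i, (p i).length ≤ n + 1) ∧
      (∀ i j, i ≠ j → ∀ v, v ∈ (p i).support → v ∈ (p j).support →
        v = x ∨ v = y) := by
  classical
  have hz : (fun j => xor (x j) (y j)) ≠ fun _ => false := by
    intro h
    apply hxy
    funext j
    have hj := congrFun h j
    revert hj
    cases x j <;> cases y j <;> simp
  obtain ⟨p0, hpath, hlen, hdisj⟩ := CubeAux.main0 n (fun j => xor (x j) (y j)) hz
  have h1 : (xorHom x) (fun _ => false) = x := by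
    funext j
    show xor (x j) false = x j
    simp
  have h2 : (xorHom x) (fun j => xor (x j) (y j)) = y := by
    funext j
    show xor (x j) (xor (x j) (y j)) = y j
    cases x j <;> simp
  refine ⟨fun i => ((p0 i).map (xorHom x)).copy h1 h2, ?_, ?_, ?_⟩
  · intro i
    rw [SimpleGraph.Walk.isPath_copy]
    exact SimpleGraph.Walk.map_isPath_of_injective (xorHom_inj x) (hpath i)
  · intro i
    rw [SimpleGraph.Walk.length_copy, SimpleGraph.Walk.length_map]
    exact hlen i
  · intro i j hij v hvi hvj
    simp only [SimpleGraph.Walk.support_copy, SimpleGraph.Walk.support_map] at hvi hvj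
    obtain ⟨u, hu, rfl⟩ := List.mem_map.mp hvi
    obtain ⟨u', hu', he⟩ := List.mem_map.mp hvj
    have heq : u' = u := xorHom_inj x he
    subst heq
    rcases hdisj i j hij u' hu hu' with h | h
    · left; rw [h, h1]
    · right; rw [h, h2]
end

section
/- Let (z(x))_{x∈{0,1}^n} be i.i.d. Exponential(1) random variables, and call a vertex x bad if z(x) ≤ 1/(64n) and good otherwise. Then with probability at least 1 − 2^{−3n}, there exists a set of canonical paths Γ = {γ_xy}, one simple path γ_xy in the n-dimensional hypercube for each ordered pair of distinct vertices (x,y), such that: (1) every path is simple with no self-loops; (2) every path has length at most n + 3; (3) any bad vertex that lies on a path γ_xy is an endpoint of that path (i.e. equals x or y). -/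
open MeasureTheory ProbabilityTheory

namespace Stmt10

variable {n : ℕ}

abbrev V (n : ℕ) := Fin n → Bool

def bflip (x : V n) (i : Fin n) : V n := Function.update x i (!x i)

lemma bflip_apply (x : V n) (i j : Fin n) :
    bflip x i j = if j = i then !x j else x j := by
  rcases eq_or_ne j i with h | h
  · subst h; simp [bflip]
  · simp [bflip, Function.update_of_ne h, h]

lemma adj_bflip (x : V n) (i : Fin n) : (cubeGraph n).Adj x (bflip x i) := by
  show hammingDist x (bflip x i) = 1
  have : ({j | x j ≠ bflip x i j} : Finset (Fin n)) = {i} := by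
    ext j
    simp only [Finset.mem_filter, Finset.mem_univ, true_and, Finset.mem_singleton,
      Set.mem_setOf_eq, bflip_apply]
    rcases eq_or_ne j i with h | h <;> simp [h]
  rw [hammingDist, this, Finset.card_singleton]

def flips (x : V n) : List (Fin n) → V n
  | [] => x
  | i :: l => flips (bflip x i) l

lemma flips_apply (l : List (Fin n)) (x : V n) (j : Fin n) :
    flips x l j = if Odd (l.count j) then !x j else x j := by
  induction l generalizing x with
  | nil => simp [flips]
  | cons i l ih =>
    rw [flips, ih, List.count_cons]
    rcases eq_or_ne i j with h | h
    · subst h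
      rcases Nat.even_or_odd (l.count i) with hc | hc
      · have h1 : ¬ Odd (l.count i) := Nat.not_odd_iff_even.mpr hc
        have h2 : Odd (l.count i + 1) := hc.add_one
        simp [h1, h2, bflip_apply]
      · have h2 : ¬ Odd (l.count i + 1) := Nat.not_odd_iff_even.mpr hc.add_one
        simp [hc, h2, bflip_apply]
    · rw [if_neg (by simp [h] : ¬ ((i == j) = true)), add_zero, bflip_apply,
        if_neg (Ne.symm h)]

def walkFlips (x : V n) : (l : List (Fin n)) → (cubeGraph n).Walk x (flips x l)
  | [] => SimpleGraph.Walk.nil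
  | i :: l => SimpleGraph.Walk.cons (adj_bflip x i) (walkFlips (bflip x i) l)

lemma length_walkFlips (x : V n) (l : List (Fin n)) :
    (walkFlips x l).length = l.length := by
  induction l generalizing x with
  | nil => rfl
  | cons i l ih => exact congrArg (· + 1) (ih (bflip x i))

lemma support_walkFlips (x : V n) (l : List (Fin n)) :
    (walkFlips x l).support
      = (List.range (l.length + 1)).map (fun k => flips x (l.take k)) := by
  induction l generalizing x with
  | nil => simp [walkFlips, flips]
  | cons i l ih =>
    show x :: (walkFlips (bflip x i) l).support = _
    rw [ih]
    conv_rhs => rw [show (i :: l).length + 1 = (l.length + 1) + 1 from rfl,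
      List.range_succ_eq_map, List.map_cons, List.map_map]
    congr 1



lemma cyclic_start_unique {d a b m : ℕ} (ha : a < d) (hb : b < d) (hm1 : 1 ≤ m)
    (hmd : m ≤ d - 1)
    (h : ∀ t, (∃ j, j < m ∧ t = (j + a) % d) ↔ (∃ j, j < m ∧ t = (j + b) % d)) : a = b := by
  have hd : 0 < d := lt_of_le_of_lt (Nat.zero_le a) ha
  obtain ⟨j0, hj0m, hj0⟩ := (h b).mpr ⟨0, hm1, by rw [Nat.zero_add, Nat.mod_eq_of_lt hb]⟩
  rcases Nat.eq_zero_or_pos j0 with h0 | h0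
  · subst h0
    rw [Nat.zero_add, Nat.mod_eq_of_lt ha] at hj0
    exact hj0.symm
  · exfalso
    obtain ⟨j, hjm, hj⟩ := (h ((j0 - 1 + a) % d)).mp ⟨j0 - 1, by omega, rfl⟩
    have h1 : (j0 - 1 + a) ≡ j + b [MOD d] := hj
    have h2 : b ≡ j0 + a [MOD d] := by
      show b % d = (j0 + a) % d
      rw [Nat.mod_eq_of_lt hb, hj0]
    have h3 : (j0 - 1 + a) ≡ j + (j0 + a) [MOD d] := h1.trans (Nat.ModEq.add_left j h2)
    have h4 : (j0 - 1 + a) + 1 ≡ (j + (j0 + a)) + 1 [MOD d] := h3.add_right 1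
    have h5 : j0 - 1 + a + 1 = j0 + a := by omega
    have h7 : (j + (j0 + a)) + 1 = (j0 + a) + (j + 1) := by ring
    rw [h5, h7] at h4
    have h8 : d ∣ (j0 + a) + (j + 1) - (j0 + a) :=
      (Nat.modEq_iff_dvd' (Nat.le_add_right _ _)).mp h4
    rw [Nat.add_sub_cancel_left] at h8
    have := Nat.le_of_dvd (by omega) h8
    omega


section Pair

variable (x y : V n)

noncomputable def DL (x y : V n) : List (Fin n) :=
  (Finset.univ.filter (fun j => x j ≠ y j)).toList

lemma nodup_DL : (DL x y).Nodup := Finset.nodup_toList _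

lemma mem_DL {j : Fin n} : j ∈ DL x y ↔ x j ≠ y j := by
  simp [DL]

lemma length_DL_le : (DL x y).length ≤ n := by
  rw [DL, Finset.length_toList]
  exact le_trans (Finset.card_filter_le _ _) (le_of_eq (Finset.card_fin n))

lemma length_DL_pos (hxy : x ≠ y) : 0 < (DL x y).length := by
  rw [DL, Finset.length_toList, Finset.card_pos]
  obtain ⟨j, hj⟩ := Function.ne_iff.mp hxy
  exact ⟨j, by simp [hj]⟩

/-- The list of coordinates flipped along the `i`-th canonical path from `x` to `y`. -/
noncomputable def flipList (x y : V n) (i : Fin n) : List (Fin n) :=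
  if i ∈ DL x y then (DL x y).rotate ((DL x y).idxOf i) else i :: (DL x y ++ [i])

lemma count_DL (j : Fin n) :
    (DL x y).count j = if j ∈ DL x y then 1 else 0 :=
  List.Nodup.count (nodup_DL x y)

lemma odd_count_flipList (i j : Fin n) :
    Odd ((flipList x y i).count j) ↔ j ∈ DL x y := by
  rw [flipList]
  split_ifs with hi
  · rw [((DL x y).rotate_perm _).count_eq, count_DL]
    split_ifs with hj <;> simp [hj]
  · rw [List.count_cons, List.count_append, List.count_singleton]
    rcases eq_or_ne i j with h | h
    · subst h
      have : (DL x y).count i = 0 := List.count_eq_zero.mpr hi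
      simp only [this, beq_self_eq_true, if_pos rfl]
      constructor
      · intro hodd
        exfalso
        revert hodd
        decide
      · intro hmem; exact absurd hmem hi
    · have hne : ¬ ((i == j) = true) := by simp [h]
      have hne' : ¬ ((j == i) = true) := by simp [Ne.symm h]
      simp only [if_neg hne, if_neg hne', add_zero, count_DL]
      split_ifs with hj <;> simp [hj]

lemma flips_flipList (i : Fin n) : flips x (flipList x y i) = y := by
  funext j
  rw [flips_apply]
  by_cases hj : j ∈ DL x y
  · rw [if_pos ((odd_count_flipList x y i j).mpr hj)]
    have := (mem_DL x y).mp hj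
    cases hx : x j <;> cases hy : y j <;> simp_all
  · rw [if_neg (fun hodd => hj ((odd_count_flipList x y i j).mp hodd))]
    have : ¬ (x j ≠ y j) := fun hne => hj ((mem_DL x y).mpr hne)
    cases hx : x j <;> cases hy : y j <;> simp_all

lemma length_flipList (i : Fin n) :
    (flipList x y i).length = if i ∈ DL x y then (DL x y).length
      else (DL x y).length + 2 := by
  rw [flipList]
  split_ifs with hi <;> simp [List.length_rotate]

/-- The `i`-th canonical walk from `x` to `y`. -/
noncomputable def pathWalk (i : Fin n) : (cubeGraph n).Walk x y :=
  (walkFlips x (flipList x y i)).copy rfl (flips_flipList x y i)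

lemma length_pathWalk (i : Fin n) :
    (pathWalk x y i).length = (flipList x y i).length := by
  rw [pathWalk, SimpleGraph.Walk.length_copy, length_walkFlips]

lemma length_pathWalk_le (i : Fin n) :
    (pathWalk x y i).length ≤ n + 2 := by
  rw [length_pathWalk, length_flipList]
  have := length_DL_le x y
  split_ifs <;> omega

/-- The internal vertices of the `i`-th canonical walk. -/
noncomputable def internals (x y : V n) (i : Fin n) : Finset (V n) :=
  (Finset.Icc 1 ((flipList x y i).length - 1)).image
    (fun k => flips x ((flipList x y i).take k))

lemma card_internals_le (i : Fin n) : (internals x y i).card ≤ n + 1 := by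
  refine le_trans (Finset.card_image_le) ?_
  rw [Nat.card_Icc]
  have h1 : (flipList x y i).length ≤ n + 2 := by
    rw [length_flipList]
    have := length_DL_le x y
    split_ifs <;> omega
  omega

lemma support_pathWalk_subset {i : Fin n} {v : V n}
    (hv : v ∈ (pathWalk x y i).support) :
    v = x ∨ v = y ∨ v ∈ internals x y i := by
  rw [pathWalk, SimpleGraph.Walk.support_copy, support_walkFlips] at hv
  obtain ⟨k, hk, rfl⟩ := List.mem_map.mp hv
  rw [List.mem_range] at hk
  rcases Nat.eq_zero_or_pos k with h0 | h0
  · subst h0; left; rfl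
  rcases eq_or_lt_of_le (Nat.lt_succ_iff.mp hk) with hlen | hlen
  · right; left
    rw [hlen, List.take_length, flips_flipList]
  · right; right
    exact Finset.mem_image.mpr ⟨k, Finset.mem_Icc.mpr ⟨h0, by omega⟩, rfl⟩


def oddset (l : List (Fin n)) : Finset (Fin n) :=
  Finset.univ.filter (fun j => Odd (l.count j))

lemma oddset_eq_of_flips_eq {l l' : List (Fin n)} {x : V n}
    (h : flips x l = flips x l') : oddset l = oddset l' := by
  ext j
  simp only [oddset, Finset.mem_filter, Finset.mem_univ, true_and]
  have hj := congrFun h j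
  rw [flips_apply, flips_apply] at hj
  by_cases h1 : Odd (l.count j) <;> by_cases h2 : Odd (l'.count j)
  · exact iff_of_true h1 h2
  · rw [if_pos h1, if_neg h2] at hj; exfalso; cases x j <;> simp_all
  · rw [if_neg h1, if_pos h2] at hj; exfalso; cases x j <;> simp_all
  · exact iff_of_false h1 h2

lemma oddset_of_nodup {l : List (Fin n)} (h : l.Nodup) : oddset l = l.toFinset := by
  ext j
  simp only [oddset, Finset.mem_filter, Finset.mem_univ, true_and, List.mem_toFinset,
    List.Nodup.count h]
  split_ifs with hj <;> simp [hj]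

lemma mem_take_rotate {l : List (Fin n)} {a m : ℕ} (hm : m ≤ l.length) (hd : 0 < l.length)
    {w : Fin n} :
    w ∈ (l.rotate a).take m ↔
      ∃ j, j < m ∧ w = l[(j + a) % l.length]'(Nat.mod_lt _ hd) := by
  have hlen : ((l.rotate a).take m).length = m := by
    rw [List.length_take, List.length_rotate]
    omega
  constructor
  · intro hw
    obtain ⟨q, hq, hqe⟩ := List.mem_iff_getElem.mp hw
    rw [hlen] at hq
    refine ⟨q, hq, ?_⟩
    rw [← hqe, List.getElem_take, List.getElem_rotate]
  · rintro ⟨j, hj, rfl⟩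
    apply List.mem_iff_getElem.mpr
    refine ⟨j, by rw [hlen]; exact hj, ?_⟩
    rw [List.getElem_take, List.getElem_rotate]

variable {x y : V n}

lemma flipList_of_mem {i : Fin n} (hi : i ∈ DL x y) :
    flipList x y i = (DL x y).rotate ((DL x y).idxOf i) := if_pos hi

lemma flipList_of_not_mem {i : Fin n} (hi : i ∉ DL x y) :
    flipList x y i = i :: (DL x y ++ [i]) := if_neg hi

lemma internal_mem_case {i : Fin n} {v : V n} (hi : i ∈ DL x y)
    (hv : v ∈ internals x y i) :
    ∃ k, 1 ≤ k ∧ k ≤ (DL x y).length - 1 ∧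
      v = flips x (((DL x y).rotate ((DL x y).idxOf i)).take k) := by
  obtain ⟨k, hk, rfl⟩ := Finset.mem_image.mp hv
  rw [Finset.mem_Icc, length_flipList, if_pos hi] at hk
  exact ⟨k, hk.1, hk.2, by rw [flipList_of_mem hi]⟩

lemma internal_not_mem_case {i : Fin n} {v : V n} (hi : i ∉ DL x y)
    (hv : v ∈ internals x y i) :
    ∃ k, 1 ≤ k ∧ k ≤ (DL x y).length + 1 ∧
      v = flips x (i :: (DL x y).take (k - 1)) := by
  obtain ⟨k, hk, rfl⟩ := Finset.mem_image.mp hv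
  rw [Finset.mem_Icc, length_flipList, if_neg hi] at hk
  have hk2 : k ≤ (DL x y).length + 1 := by omega
  refine ⟨k, hk.1, hk2, ?_⟩
  rw [flipList_of_not_mem hi, List.take_cons (by omega),
    List.take_append_of_le_length (by omega)]

def dset (x v : V n) : Finset (Fin n) := Finset.univ.filter (fun j => v j ≠ x j)

lemma dset_flips (x : V n) (l : List (Fin n)) : dset x (flips x l) = oddset l := by
  ext j
  simp only [dset, oddset, Finset.mem_filter, Finset.mem_univ, true_and, flips_apply]
  split_ifs with hj
  · simp [hj]
  · simp [hj]

lemma nodup_take_rotate {a k : ℕ} : (((DL x y).rotate a).take k).Nodup :=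
  List.Nodup.sublist (List.take_sublist _ _) ((List.nodup_rotate).mpr (nodup_DL x y))

lemma dset_internal_mem {i : Fin n} {v : V n} (hi : i ∈ DL x y)
    (hv : v ∈ internals x y i) : dset x v ⊆ (DL x y).toFinset := by
  obtain ⟨k, _, _, rfl⟩ := internal_mem_case hi hv
  rw [dset_flips, oddset_of_nodup nodup_take_rotate]
  intro j hj
  rw [List.mem_toFinset] at hj ⊢
  exact (List.rotate_perm _ _).mem_iff.mp (List.mem_of_mem_take hj)

lemma nodup_cons_take {i : Fin n} (hi : i ∉ DL x y) {m : ℕ} :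
    (i :: (DL x y).take m).Nodup := by
  refine List.nodup_cons.mpr ⟨fun hmem => hi (List.mem_of_mem_take hmem), ?_⟩
  exact (nodup_DL x y).sublist (List.take_sublist _ _)

lemma dset_internal_not_mem {i : Fin n} {v : V n} (hi : i ∉ DL x y)
    (hv : v ∈ internals x y i) :
    i ∈ dset x v ∧ ∀ j ∈ dset x v, j ∉ (DL x y).toFinset → j = i := by
  obtain ⟨k, _, _, rfl⟩ := internal_not_mem_case hi hv
  rw [dset_flips, oddset_of_nodup (nodup_cons_take hi)]
  constructor
  · simp
  · intro j hj hjD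
    rcases List.mem_cons.mp (List.mem_toFinset.mp hj) with h | h
    · exact h
    · exact absurd (List.mem_toFinset.mpr (List.mem_of_mem_take h)) hjD

lemma internals_disjoint (hxy : x ≠ y) {i i' : Fin n} (hne : i ≠ i') :
    Disjoint (internals x y i) (internals x y i') := by
  rw [Finset.disjoint_left]
  intro v hv hv'
  by_cases hi : i ∈ DL x y <;> by_cases hi' : i' ∈ DL x y
  · -- both in DL : cyclic interval argument
    obtain ⟨k, hk1, hk2, hveq⟩ := internal_mem_case hi hv
    obtain ⟨k', hk1', hk2', hveq'⟩ := internal_mem_case hi' hv'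
    have hdpos : 0 < (DL x y).length := length_DL_pos x y hxy
    have ha : (DL x y).idxOf i < (DL x y).length := List.idxOf_lt_length_iff.mpr hi
    have ha' : (DL x y).idxOf i' < (DL x y).length := List.idxOf_lt_length_iff.mpr hi'
    have hflips : flips x (((DL x y).rotate ((DL x y).idxOf i)).take k)
        = flips x (((DL x y).rotate ((DL x y).idxOf i')).take k') := by
      rw [← hveq, ← hveq']
    have hoe := oddset_eq_of_flips_eq hflips
    rw [oddset_of_nodup nodup_take_rotate, oddset_of_nodup nodup_take_rotate] at hoe
    have hkk : k = k' := by
      have c1 := List.toFinset_card_of_nodup (nodup_take_rotate (x := x) (y := y)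
        (a := (DL x y).idxOf i) (k := k))
      have c2 := List.toFinset_card_of_nodup (nodup_take_rotate (x := x) (y := y)
        (a := (DL x y).idxOf i') (k := k'))
      rw [hoe] at c1
      rw [c2, List.length_take, List.length_take, List.length_rotate,
        List.length_rotate] at c1
      omega
    subst hkk
    have key : ∀ t, (∃ j, j < k ∧ t = (j + (DL x y).idxOf i) % (DL x y).length) ↔
        (∃ j, j < k ∧ t = (j + (DL x y).idxOf i') % (DL x y).length) := by
      intro t
      constructor
      · rintro ⟨j, hj, rfl⟩
        have hw : (DL x y)[(j + (DL x y).idxOf i) % (DL x y).length]'(Nat.mod_lt _ hdpos)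
            ∈ ((DL x y).rotate ((DL x y).idxOf i)).take k :=
          (mem_take_rotate (by omega) hdpos).mpr ⟨j, hj, rfl⟩
        rw [← List.mem_toFinset, hoe, List.mem_toFinset] at hw
        obtain ⟨j', hj', hw'⟩ := (mem_take_rotate (by omega) hdpos).mp hw
        exact ⟨j', hj', ((nodup_DL x y).getElem_inj_iff.mp hw'.symm).symm⟩
      · rintro ⟨j, hj, rfl⟩
        have hw : (DL x y)[(j + (DL x y).idxOf i') % (DL x y).length]'(Nat.mod_lt _ hdpos)
            ∈ ((DL x y).rotate ((DL x y).idxOf i')).take k :=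
          (mem_take_rotate (by omega) hdpos).mpr ⟨j, hj, rfl⟩
        rw [← List.mem_toFinset, ← hoe, List.mem_toFinset] at hw
        obtain ⟨j', hj', hw'⟩ := (mem_take_rotate (by omega) hdpos).mp hw
        exact ⟨j', hj', ((nodup_DL x y).getElem_inj_iff.mp hw'.symm).symm⟩
    have haa : (DL x y).idxOf i = (DL x y).idxOf i' :=
      cyclic_start_unique ha ha' hk1 hk2 key
    apply hne
    have e1 : (DL x y)[(DL x y).idxOf i]'ha = i := List.getElem_idxOf ha
    have e2 : (DL x y)[(DL x y).idxOf i']'ha' = i' := List.getElem_idxOf ha'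
    rw [← e1, ← e2]
    simp only [haa]
  · -- i ∈ DL, i' ∉ DL
    have h1 := dset_internal_mem hi hv
    have h2 := dset_internal_not_mem hi' hv'
    exact absurd (List.mem_toFinset.mp (h1 h2.1)) hi'
  · have h1 := dset_internal_mem hi' hv'
    have h2 := dset_internal_not_mem hi hv
    exact absurd (List.mem_toFinset.mp (h1 h2.1)) hi
  · have h2 := dset_internal_not_mem hi hv
    have h2' := dset_internal_not_mem hi' hv'
    exact hne ((h2.2 i' h2'.1 (fun hm => hi' (List.mem_toFinset.mp hm))).symm)


lemma oddset_nil : oddset ([] : List (Fin n)) = ∅ := by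
  ext j; simp [oddset]

lemma oddset_flipList (i : Fin n) : oddset (flipList x y i) = (DL x y).toFinset := by
  ext j
  simp only [oddset, Finset.mem_filter, Finset.mem_univ, true_and,
    odd_count_flipList, List.mem_toFinset]

lemma oddset_take_not_mem {i : Fin n} (hi : i ∉ DL x y) {k : ℕ} (hk1 : 1 ≤ k)
    (hk2 : k ≤ (DL x y).length + 1) :
    oddset ((flipList x y i).take k) = insert i ((DL x y).take (k - 1)).toFinset := by
  rw [flipList_of_not_mem hi, List.take_cons (by omega),
    List.take_append_of_le_length (by omega), oddset_of_nodup (nodup_cons_take hi)]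
  simp

lemma sig_take {i : Fin n} (hi : i ∉ DL x y) {m : ℕ}
    (hm : m < (flipList x y i).length + 1) :
    (oddset ((flipList x y i).take m)).card
        = (if m = (DL x y).length + 2 then (DL x y).length else m) ∧
      (i ∈ oddset ((flipList x y i).take m) ↔ (1 ≤ m ∧ m ≤ (DL x y).length + 1)) := by
  have hlen : (flipList x y i).length = (DL x y).length + 2 := by
    rw [length_flipList, if_neg hi]
  rcases Nat.eq_zero_or_pos m with h0 | h0
  · subst h0
    rw [List.take_zero, oddset_nil]
    constructor
    · rw [if_neg (by omega)]; simp
    · simp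
  rcases eq_or_lt_of_le (by omega : m ≤ (DL x y).length + 2) with hfull | hmid
  · have htake : (flipList x y i).take m = flipList x y i :=
      List.take_of_length_le (by omega)
    rw [htake, oddset_flipList]
    constructor
    · rw [if_pos hfull, List.toFinset_card_of_nodup (nodup_DL x y)]
    · rw [List.mem_toFinset]
      constructor
      · intro hmem; exact absurd hmem hi
      · intro hc; omega
  · have hm2 : m ≤ (DL x y).length + 1 := by omega
    rw [oddset_take_not_mem hi h0 hm2]
    have hnotmem : i ∉ ((DL x y).take (m - 1)).toFinset := fun hmem =>
      hi (List.mem_of_mem_take (List.mem_toFinset.mp hmem))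
    constructor
    · rw [Finset.card_insert_of_notMem hnotmem,
        List.toFinset_card_of_nodup ((nodup_DL x y).sublist (List.take_sublist _ _)),
        List.length_take, if_neg (by omega)]
      omega
    · constructor
      · intro _; exact ⟨h0, hm2⟩
      · intro _; exact Finset.mem_insert_self _ _

lemma isPath_pathWalk (hxy : x ≠ y) (i : Fin n) : (pathWalk x y i).IsPath := by
  rw [SimpleGraph.Walk.isPath_def, pathWalk, SimpleGraph.Walk.support_copy,
    support_walkFlips]
  refine List.Nodup.map_on ?_ List.nodup_range
  intro k hk k' hk' heq
  rw [List.mem_range] at hk hk'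
  have hoe := oddset_eq_of_flips_eq heq
  by_cases hi : i ∈ DL x y
  · have hlen : (flipList x y i).length = (DL x y).length := by
      rw [length_flipList, if_pos hi]
    rw [hlen] at hk hk'
    rw [flipList_of_mem hi, oddset_of_nodup nodup_take_rotate,
      oddset_of_nodup nodup_take_rotate] at hoe
    have hc := congrArg Finset.card hoe
    simp only [List.toFinset_card_of_nodup nodup_take_rotate, List.length_take,
      List.length_rotate] at hc
    omega
  · have hlen : (flipList x y i).length = (DL x y).length + 2 := by
      rw [length_flipList, if_neg hi]
    have hd : 0 < (DL x y).length := length_DL_pos x y hxy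
    obtain ⟨c1, m1⟩ := sig_take hi hk
    obtain ⟨c2, m2⟩ := sig_take hi hk'
    have hc : (if k = (DL x y).length + 2 then (DL x y).length else k)
        = (if k' = (DL x y).length + 2 then (DL x y).length else k') := by
      rw [← c1, ← c2, hoe]
    have hmm : (1 ≤ k ∧ k ≤ (DL x y).length + 1) ↔ (1 ≤ k' ∧ k' ≤ (DL x y).length + 1) := by
      rw [← m1, ← m2, hoe]
    split_ifs at hc <;> omega

end Pair



section Prob

variable {Ω : Type} [MeasurableSpace Ω] {μ : Measure Ω} [IsProbabilityMeasure μ]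
  {z : V n → Ω → ℝ}

lemma meas_biInter_eq_prod (hmeas : ∀ v, Measurable (z v))
    (hindep : iIndepFun z μ)
    (T : Fin n → Finset (V n)) (hdisj : ∀ i j, i ≠ j → Disjoint (T i) (T j)) (c : ℝ)
    (s : Finset (Fin n)) :
    μ (⋂ i ∈ s, {ω | ∃ v ∈ T i, z v ω ≤ c})
      = ∏ i ∈ s, μ {ω | ∃ v ∈ T i, z v ω ≤ c} := by
  classical
  induction s using Finset.induction_on with
  | empty => simp
  | insert a s ha ih =>
    have hSU : Disjoint (T a) (s.biUnion T) := by
      rw [Finset.disjoint_biUnion_right]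
      intro j hj
      exact hdisj a j (fun h => ha (h ▸ hj))
    have hIF := hindep.indepFun_finset (T a) (s.biUnion T) hSU hmeas
    set A : Set (↥(T a) → ℝ) := {g | ∃ v : ↥(T a), g v ≤ c}
      with hA_def
    set B : Set (↥(s.biUnion T) → ℝ) :=
      ⋂ i ∈ s, ⋃ (v : ↥(s.biUnion T)) (_ : (v : V n) ∈ T i),
        {g | g v ≤ c} with hB_def
    have hmA : MeasurableSet A := by
      have : A = ⋃ v : ↥(T a), (fun g => g v) ⁻¹' (Set.Iic c) := by
        ext g; simp [hA_def, Set.mem_iUnion]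
      rw [this]
      exact MeasurableSet.iUnion fun v => (measurable_pi_apply v) measurableSet_Iic
    have hmB : MeasurableSet B := by
      refine MeasurableSet.biInter (Set.to_countable _) fun i _ => ?_
      refine MeasurableSet.iUnion fun v => MeasurableSet.iUnion fun _ => ?_
      exact (measurable_pi_apply v) measurableSet_Iic
    have hA : (fun ω (v : ↥(T a)) => z v ω) ⁻¹' A
        = {ω | ∃ v ∈ T a, z v ω ≤ c} := by
      ext ω
      simp [hA_def, Subtype.exists]
    have hB : (fun ω (v : ↥(s.biUnion T)) => z v ω) ⁻¹' B
        = ⋂ i ∈ s, {ω | ∃ v ∈ T i, z v ω ≤ c} := by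
      ext ω
      simp only [hB_def, Set.mem_preimage, Set.mem_iInter, Set.mem_iUnion,
        Set.mem_setOf_eq, Subtype.exists, exists_prop, Finset.mem_biUnion]
      constructor
      · intro h i hi
        obtain ⟨v, _, hvi, hle⟩ := h i hi
        exact ⟨v, hvi, hle⟩
      · intro h i hi
        obtain ⟨v, hvi, hle⟩ := h i hi
        exact ⟨v, ⟨i, hi, hvi⟩, hvi, hle⟩
    rw [Finset.set_biInter_insert, Finset.prod_insert ha, ← ih, ← hA, ← hB]
    exact hIF.measure_inter_preimage_eq_mul A B hmA hmB

lemma measure_single (hmeas : ∀ v, Measurable (z v))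
    (hlaw : ∀ v, μ.map (z v) = expMeasure 1) (v : V n) {c : ℝ} (hc : 0 ≤ c) :
    μ {ω | z v ω ≤ c} = ENNReal.ofReal (1 - Real.exp (-c)) := by
  have h1 : {ω | z v ω ≤ c} = z v ⁻¹' (Set.Iic c) := rfl
  rw [h1, ← Measure.map_apply (hmeas v) measurableSet_Iic, hlaw]
  rw [expMeasure, gammaMeasure, withDensity_apply _ measurableSet_Iic]
  have h2 : ∀ t, gammaPDF 1 1 t = exponentialPDF 1 t := fun t => rfl
  calc ∫⁻ t in Set.Iic c, gammaPDF 1 1 t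
      = ∫⁻ t in Set.Iic c, exponentialPDF 1 t := by simp only [h2]
    _ = ENNReal.ofReal (if 0 ≤ c then 1 - Real.exp (-(1 * c)) else 0) :=
        lintegral_exponentialPDF_eq_antiDeriv one_pos c
    _ = ENNReal.ofReal (1 - Real.exp (-c)) := by rw [if_pos hc, one_mul]

lemma measure_single_le (hmeas : ∀ v, Measurable (z v))
    (hlaw : ∀ v, μ.map (z v) = expMeasure 1) (v : V n) {c : ℝ} (hc : 0 ≤ c) :
    μ {ω | z v ω ≤ c} ≤ ENNReal.ofReal c := by
  rw [measure_single hmeas hlaw v hc]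
  apply ENNReal.ofReal_le_ofReal
  have := Real.add_one_le_exp (-c)
  linarith

end Prob

end Stmt10

open Stmt10 in
/-- Attach i.i.d. `Exponential(1)` weights `z(x)` to the vertices of
`{0,1}^n` and call a vertex bad if `z(x) ≤ 1/(64n)`. With probability at least
`1 - 2^{-3n}` there is a system of canonical paths, one simple path `γ_{xy}` for each
ordered pair of distinct vertices, each of length at most `n + 3`, such that any bad
vertex lying on a path is one of its endpoints. -/
theorem stmt_10 (n : ℕ) (hn : 1 ≤ n)
    (Ω : Type) [MeasurableSpace Ω] (μ : Measure Ω) [IsProbabilityMeasure μ]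
    (z : (Fin n → Bool) → Ω → ℝ) (hmeas : ∀ x, Measurable (z x))
    (hindep : iIndepFun z μ)
    (hlaw : ∀ x, μ.map (z x) = expMeasure 1) :
    1 - ENNReal.ofReal (((2 : ℝ) ^ (3 * n))⁻¹) ≤
      μ {ω | ∃ γ : ∀ x y : Fin n → Bool, (cubeGraph n).Walk x y,
        ∀ x y : Fin n → Bool, x ≠ y →
          (γ x y).IsPath ∧
          (γ x y).length ≤ n + 3 ∧
          (∀ v ∈ (γ x y).support, z v ω ≤ 1 / (64 * (n : ℝ)) → v = x ∨ v = y)} := by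
  classical
  set c : ℝ := 1 / (64 * (n : ℝ)) with hc_def
  have hnR : (1:ℝ) ≤ (n:ℝ) := by exact_mod_cast hn
  have hc : 0 ≤ c := by rw [hc_def]; positivity
  set Bad : V n → V n → Set Ω := fun x y =>
    if x ≠ y then
      ⋂ i ∈ (Finset.univ : Finset (Fin n)), {ω | ∃ v ∈ internals x y i, z v ω ≤ c}
    else ∅ with hBad_def
  have hpair : ∀ x y : V n, μ (Bad x y) ≤ (ENNReal.ofReal (1/32)) ^ n := by
    intro x y
    by_cases hxy : x = y
    · simp [hBad_def, hxy]
    · rw [hBad_def]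
      simp only []
      rw [if_pos hxy]
      rw [meas_biInter_eq_prod hmeas hindep (internals x y)
        (fun i j hij => internals_disjoint hxy hij) c]
      have hfac : ∀ i : Fin n,
          μ {ω | ∃ v ∈ internals x y i, z v ω ≤ c} ≤ ENNReal.ofReal (1/32) := by
        intro i
        have hBi : {ω | ∃ v ∈ internals x y i, z v ω ≤ c}
            = ⋃ v ∈ internals x y i, {ω | z v ω ≤ c} := by
          ext ω; simp
        rw [hBi]
        refine le_trans (measure_biUnion_finset_le _ _) ?_
        refine le_trans (Finset.sum_le_card_nsmul _ _ (ENNReal.ofReal c)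
          (fun v _ => measure_single_le hmeas hlaw v hc)) ?_
        rw [nsmul_eq_mul]
        have h1 : (((internals x y i).card : ℕ) : ENNReal) ≤ ((n+1 : ℕ) : ENNReal) :=
          Nat.cast_le.mpr (card_internals_le x y i)
        refine le_trans (mul_le_mul' h1 le_rfl) ?_
        rw [← ENNReal.ofReal_natCast (n+1), ← ENNReal.ofReal_mul (by positivity)]
        apply ENNReal.ofReal_le_ofReal
        rw [hc_def]
        push_cast
        rw [mul_one_div, div_le_div_iff₀ (by positivity) (by norm_num)]
        nlinarith [hnR]
      calc ∏ i : Fin n, μ {ω | ∃ v ∈ internals x y i, z v ω ≤ c}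
          ≤ ∏ _i : Fin n, ENNReal.ofReal (1/32) :=
            Finset.prod_le_prod' (fun i _ => hfac i)
        _ = (ENNReal.ofReal (1/32)) ^ n := by
            rw [Finset.prod_const, Finset.card_univ, Fintype.card_fin]
  have hunion : μ (⋃ p : V n × V n, Bad p.1 p.2)
      ≤ ENNReal.ofReal (((2:ℝ) ^ (3*n))⁻¹) := by
    refine le_trans (measure_iUnion_le _) ?_
    rw [tsum_fintype]
    refine le_trans (Finset.sum_le_card_nsmul _ _ ((ENNReal.ofReal (1/32)) ^ n)
      (fun p _ => hpair p.1 p.2)) ?_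
    rw [nsmul_eq_mul, Finset.card_univ]
    have hcard : ((Fintype.card (V n × V n) : ℕ) : ENNReal) = ((2^n * 2^n : ℕ) : ENNReal) := by
      rw [Fintype.card_prod, Fintype.card_fun, Fintype.card_bool, Fintype.card_fin]
    rw [hcard, ← ENNReal.ofReal_pow (by norm_num), ← ENNReal.ofReal_natCast,
      ← ENNReal.ofReal_mul (by positivity)]
    apply ENNReal.ofReal_le_ofReal
    push_cast
    have e : (2:ℝ)^n * 2^n * (1/32)^n = ((2:ℝ)^(3*n))⁻¹ := by
      rw [← mul_pow, ← mul_pow, pow_mul,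
        show (2:ℝ)*2*(1/32) = (8:ℝ)⁻¹ by norm_num,
        show ((2:ℝ)^3) = 8 by norm_num, inv_pow]
    rw [e]
  have hsubset : (⋃ p : V n × V n, Bad p.1 p.2)ᶜ ⊆
      {ω | ∃ γ : ∀ x y : Fin n → Bool, (cubeGraph n).Walk x y,
        ∀ x y : Fin n → Bool, x ≠ y →
          (γ x y).IsPath ∧
          (γ x y).length ≤ n + 3 ∧
          (∀ v ∈ (γ x y).support, z v ω ≤ c → v = x ∨ v = y)} := by
    intro ω hω
    simp only [Set.mem_compl_iff, Set.mem_iUnion, not_exists] at hω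
    have hget : ∀ x y : V n, x ≠ y →
        ∃ i : Fin n, ∀ v ∈ internals x y i, ¬ (z v ω ≤ c) := by
      intro x y hxy
      have hxyB := hω (x, y)
      rw [hBad_def] at hxyB
      simp only [] at hxyB
      rw [if_pos hxy] at hxyB
      by_contra hcon
      push_neg at hcon
      apply hxyB
      refine Set.mem_iInter₂.mpr fun i _ => ?_
      obtain ⟨v, hv1, hv2⟩ := hcon i
      exact ⟨v, hv1, hv2⟩
    have hWalk : ∀ x y : V n, ∃ w : (cubeGraph n).Walk x y,
        x ≠ y → w.IsPath ∧ w.length ≤ n + 3 ∧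
          (∀ v ∈ w.support, z v ω ≤ c → v = x ∨ v = y) := by
      intro x y
      by_cases hxy : x = y
      · subst hxy; exact ⟨SimpleGraph.Walk.nil, fun h => absurd rfl h⟩
      · obtain ⟨i, hi⟩ := hget x y hxy
        refine ⟨pathWalk x y i, fun _ => ⟨isPath_pathWalk hxy i,
          le_trans (length_pathWalk_le x y i) (by omega), ?_⟩⟩
        intro v hv hvz
        rcases support_pathWalk_subset x y hv with h | h | h
        · exact Or.inl h
        · exact Or.inr h
        · exact absurd hvz (hi v h)
    choose γ hγ using hWalk
    exact ⟨γ, fun x y hxy => hγ x y hxy⟩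
  calc
    1 - ENNReal.ofReal (((2:ℝ)^(3*n))⁻¹)
        ≤ 1 - μ (⋃ p : V n × V n, Bad p.1 p.2) := tsub_le_tsub_left hunion 1
    _ ≤ μ ((⋃ p : V n × V n, Bad p.1 p.2)ᶜ) := by
        rw [tsub_le_iff_right]
        calc (1:ENNReal) = μ Set.univ := (measure_univ).symm
          _ = μ ((⋃ p : V n × V n, Bad p.1 p.2)ᶜ ∪ (⋃ p : V n × V n, Bad p.1 p.2)) := by
              rw [Set.compl_union_self]
          _ ≤ _ := measure_union_le _ _
    _ ≤ _ := measure_mono hsubset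
end

section
/- Fix an origin u ∈ {0,1}^n and define the level of a vertex v as L(v) = d(u,v). For a path P = (v₀, v₁, …, v_ℓ) in the hypercube (consecutive vertices adjacent), call the i-th step P_i an up arrow if L(v_i) = L(v_{i−1}) + 1 and a down arrow if L(v_i) = L(v_{i−1}) − 1, and define the level of a step as L(P_i) = min(L(v_{i−1}), L(v_i)). Let n_{↑,b}(P,i) be the number of up arrows among steps 1,…,i−1 and n_{↓,a}(P,i) the number of down arrows among steps i+1,…,ℓ. Suppose P* is a path of length ℓ* from s* to t' whose (ℓ*−1)-th step is an up arrow from s to t. Then for every path P of length ℓ* from s* to t' and every i ∈ {1,…,ℓ*}: L(P_i) ≤ L(s) + n_{↑,b}(P,i) + n_{↓,a}(P,i). -/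
open Finset

lemma parity13 (n : ℕ) (x y : Fin n → Bool) :
    (hammingDist x y : ZMod 2) = ∑ i, (if x i then (1:ZMod 2) else 0) + ∑ i, (if y i then (1:ZMod 2) else 0) := by
  rw [hammingDist, Finset.card_filter]
  push_cast
  rw [← Finset.sum_add_distrib]
  apply Finset.sum_congr rfl
  intro i _
  cases hx : x i <;> cases hy : y i <;> simp <;> decide

lemma step13 (n : ℕ) (u x y : Fin n → Bool) (h : hammingDist x y = 1) :
    hammingDist u y = hammingDist u x + 1 ∨ hammingDist u x = hammingDist u y + 1 := by
  have t1 : hammingDist u y ≤ hammingDist u x + 1 := by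
    have := hammingDist_triangle u x y; omega
  have t2 : hammingDist u x ≤ hammingDist u y + 1 := by
    have := hammingDist_triangle u y x; rw [hammingDist_comm y x] at this; omega
  have hne : hammingDist u x ≠ hammingDist u y := by
    intro he
    have p1 := parity13 n u x
    have p2 := parity13 n u y
    have p3 := parity13 n x y
    rw [he] at p1
    have hXY := add_left_cancel (p1.symm.trans p2)
    rw [← hXY, h] at p3
    rw [CharTwo.add_self_eq_zero] at p3
    simp at p3
  omega

lemma icc_insert (m : ℕ) : Finset.Icc 1 (m+1) = insert (m+1) (Finset.Icc 1 m) := by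
  ext j; simp; omega

lemma walkstep13 {n : ℕ} (u : Fin n → Bool) {a b : Fin n → Bool}
    (P : (cubeGraph n).Walk a b) (j : ℕ) (hj1 : 1 ≤ j) (hj2 : j ≤ P.length) :
    hammingDist u (P.getVert j) = hammingDist u (P.getVert (j - 1)) + 1 ∨
      hammingDist u (P.getVert (j - 1)) = hammingDist u (P.getVert j) + 1 := by
  have hadj := P.adj_getVert_succ (i := j - 1) (by omega)
  have hj : j - 1 + 1 = j := by omega
  rw [hj] at hadj
  exact step13 n u _ _ hadj

lemma count13 {n : ℕ} (u : Fin n → Bool) {a b : Fin n → Bool}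
    (P : (cubeGraph n).Walk a b) :
    ∀ m, m ≤ P.length →
    (hammingDist u (P.getVert m) +
      ((Finset.Icc 1 m).filter
        (fun j => hammingDist u (P.getVert (j - 1)) = hammingDist u (P.getVert j) + 1)).card
      = hammingDist u a +
      ((Finset.Icc 1 m).filter
        (fun j => hammingDist u (P.getVert j) = hammingDist u (P.getVert (j - 1)) + 1)).card)
    ∧ ((Finset.Icc 1 m).filter
        (fun j => hammingDist u (P.getVert j) = hammingDist u (P.getVert (j - 1)) + 1)).card
      + ((Finset.Icc 1 m).filter
        (fun j => hammingDist u (P.getVert (j - 1)) = hammingDist u (P.getVert j) + 1)).card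
      = m := by
  intro m
  induction m with
  | zero => intro _; simp [P.getVert_zero]
  | succ m ih =>
    intro hm
    obtain ⟨ih1, ih2⟩ := ih (by omega)
    have hnm : (m+1) ∉ Finset.Icc 1 m := by simp
    have hstep := walkstep13 u P (m+1) (by omega) hm
    have hmm : m + 1 - 1 = m := by omega
    rw [hmm] at hstep
    rcases hstep with h | h
    · have e1 : ((Finset.Icc 1 (m+1)).filter
          (fun j => hammingDist u (P.getVert (j - 1)) = hammingDist u (P.getVert j) + 1)).card
          = ((Finset.Icc 1 m).filter
          (fun j => hammingDist u (P.getVert (j - 1)) = hammingDist u (P.getVert j) + 1)).card := by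
        rw [icc_insert, Finset.filter_insert, if_neg]
        simp only [Nat.add_sub_cancel]
        omega
      have e2 : ((Finset.Icc 1 (m+1)).filter
          (fun j => hammingDist u (P.getVert j) = hammingDist u (P.getVert (j - 1)) + 1)).card
          = ((Finset.Icc 1 m).filter
          (fun j => hammingDist u (P.getVert j) = hammingDist u (P.getVert (j - 1)) + 1)).card + 1 := by
        rw [icc_insert, Finset.filter_insert, if_pos (by simp only [Nat.add_sub_cancel]; exact h),
          Finset.card_insert_of_notMem (by simp)]
      exact ⟨by omega, by omega⟩
    · have e1 : ((Finset.Icc 1 (m+1)).filter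
          (fun j => hammingDist u (P.getVert (j - 1)) = hammingDist u (P.getVert j) + 1)).card
          = ((Finset.Icc 1 m).filter
          (fun j => hammingDist u (P.getVert (j - 1)) = hammingDist u (P.getVert j) + 1)).card + 1 := by
        rw [icc_insert, Finset.filter_insert, if_pos (by simp only [Nat.add_sub_cancel]; exact h),
          Finset.card_insert_of_notMem (by simp)]
      have e2 : ((Finset.Icc 1 (m+1)).filter
          (fun j => hammingDist u (P.getVert j) = hammingDist u (P.getVert (j - 1)) + 1)).card
          = ((Finset.Icc 1 m).filter
          (fun j => hammingDist u (P.getVert j) = hammingDist u (P.getVert (j - 1)) + 1)).card := by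
        rw [icc_insert, Finset.filter_insert, if_neg]
        simp only [Nat.add_sub_cancel]
        omega
      exact ⟨by omega, by omega⟩

lemma split13 (p : ℕ → Prop) [DecidablePred p] (i lstar : ℕ) (h : i ≤ lstar) :
    ((Finset.Icc 1 lstar).filter p).card =
      ((Finset.Icc 1 i).filter p).card + ((Finset.Icc (i+1) lstar).filter p).card := by
  have hu : Finset.Icc 1 lstar = Finset.Icc 1 i ∪ Finset.Icc (i+1) lstar := by
    ext j; simp; omega
  have hd : Disjoint ((Finset.Icc 1 i).filter p) ((Finset.Icc (i+1) lstar).filter p) := by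
    simp only [Finset.disjoint_left, Finset.mem_filter, Finset.mem_Icc]
    intro j hj1 hj2
    omega
  rw [hu, Finset.filter_union, Finset.card_union_of_disjoint hd]

/-- Fix an origin `u` and let `L(v) = d(u,v)` be the level of a vertex.
If `P*` is a path of length `ℓ*` from `s*` to `t'` whose `(ℓ*-1)`-th step is an up arrow
from `s` to `t`, then for every walk `P` of length `ℓ*` from `s*` to `t'` and every step
`i ∈ {1,…,ℓ*}`, the level of the `i`-th step of `P` is at most
`L(s) + n_{↑,b}(P,i) + n_{↓,a}(P,i)`, where `n_{↑,b}(P,i)` counts up arrows among steps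
`1,…,i-1` and `n_{↓,a}(P,i)` counts down arrows among steps `i+1,…,ℓ*`. -/
theorem stmt_13 (n : ℕ) (u : Fin n → Bool)
    (sstar tp s t : Fin n → Bool)
    (lstar : ℕ) (hlstar : 2 ≤ lstar)
    (Pstar : (cubeGraph n).Walk sstar tp)
    (hPstarlen : Pstar.length = lstar)
    (hPstars : Pstar.getVert (lstar - 2) = s)
    (hPstart : Pstar.getVert (lstar - 1) = t)
    (hup : hammingDist u t = hammingDist u s + 1) :
    ∀ P : (cubeGraph n).Walk sstar tp, P.length = lstar →
      ∀ i ∈ Finset.Icc 1 lstar,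
        min (hammingDist u (P.getVert (i - 1))) (hammingDist u (P.getVert i)) ≤
          hammingDist u s +
          ((Finset.Icc 1 (i - 1)).filter
            (fun j => hammingDist u (P.getVert j) =
              hammingDist u (P.getVert (j - 1)) + 1)).card +
          ((Finset.Icc (i + 1) lstar).filter
            (fun j => hammingDist u (P.getVert (j - 1)) =
              hammingDist u (P.getVert j) + 1)).card := by
  intro P hPlen i hi
  rw [Finset.mem_Icc] at hi
  obtain ⟨hi1, hi2⟩ := hi
  have hlenP : lstar ≤ P.length := le_of_eq hPlen.symm
  have hPtp : P.getVert lstar = tp := by rw [← hPlen]; exact P.getVert_length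
  have hPstp : Pstar.getVert lstar = tp := by rw [← hPstarlen]; exact Pstar.getVert_length
  have c1 := count13 u P lstar hlenP
  have c2 := count13 u P i (by omega)
  have c3 := count13 u Pstar lstar (le_of_eq hPstarlen.symm)
  rw [hPtp] at c1
  rw [hPstp] at c3
  have sU := split13 (fun j => hammingDist u (P.getVert j) = hammingDist u (P.getVert (j-1)) + 1)
    i lstar hi2
  have sD := split13 (fun j => hammingDist u (P.getVert (j-1)) = hammingDist u (P.getVert j) + 1)
    i lstar hi2
  have hins : Finset.Icc 1 i = insert i (Finset.Icc 1 (i-1)) := by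
    ext j; simp; omega
  have hnmem : i ∉ Finset.Icc 1 (i-1) := by simp; omega
  -- Pstar analysis
  have hadjstar := walkstep13 u Pstar lstar (by omega) (le_of_eq hPstarlen.symm)
  rw [hPstart, hPstp] at hadjstar
  have hmem1 : (lstar - 1) ∈ (Finset.Icc 1 lstar).filter
      (fun j => hammingDist u (Pstar.getVert j) = hammingDist u (Pstar.getVert (j-1)) + 1) := by
    rw [Finset.mem_filter, Finset.mem_Icc]
    refine ⟨⟨by omega, by omega⟩, ?_⟩
    have h21 : lstar - 1 - 1 = lstar - 2 := by omega
    rw [h21, hPstars, hPstart]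
    exact hup
  have hstar : (hammingDist u tp = hammingDist u s + 2 ∧
        2 ≤ ((Finset.Icc 1 lstar).filter
          (fun j => hammingDist u (Pstar.getVert j) = hammingDist u (Pstar.getVert (j-1)) + 1)).card)
      ∨ (hammingDist u tp = hammingDist u s ∧
        1 ≤ ((Finset.Icc 1 lstar).filter
          (fun j => hammingDist u (Pstar.getVert j) = hammingDist u (Pstar.getVert (j-1)) + 1)).card) := by
    rcases hadjstar with hc | hc
    · left
      constructor
      · omega
      · have hmem2 : lstar ∈ (Finset.Icc 1 lstar).filter
            (fun j => hammingDist u (Pstar.getVert j) = hammingDist u (Pstar.getVert (j-1)) + 1) := by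
          rw [Finset.mem_filter, Finset.mem_Icc]
          refine ⟨⟨by omega, le_refl _⟩, ?_⟩
          rw [hPstart, hPstp]
          exact hc
        have hsub : ({lstar - 1, lstar} : Finset ℕ) ⊆ (Finset.Icc 1 lstar).filter
            (fun j => hammingDist u (Pstar.getVert j) = hammingDist u (Pstar.getVert (j-1)) + 1) := by
          intro x hx
          simp only [Finset.mem_insert, Finset.mem_singleton] at hx
          rcases hx with rfl | rfl
          · exact hmem1
          · exact hmem2
        calc 2 = ({lstar - 1, lstar} : Finset ℕ).card := (Finset.card_pair (by omega)).symm
          _ ≤ _ := Finset.card_le_card hsub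
    · right
      exact ⟨by omega, Finset.card_pos.mpr ⟨_, hmem1⟩⟩
  -- step i of P
  have hstepi := walkstep13 u P i hi1 (by omega)
  rcases hstepi with h | h
  · -- step i is an up arrow: min is the level of vertex i-1
    have eU : ((Finset.Icc 1 i).filter
        (fun j => hammingDist u (P.getVert j) = hammingDist u (P.getVert (j-1)) + 1)).card
        = ((Finset.Icc 1 (i-1)).filter
        (fun j => hammingDist u (P.getVert j) = hammingDist u (P.getVert (j-1)) + 1)).card + 1 := by
      rw [hins, Finset.filter_insert, if_pos h, Finset.card_insert_of_notMem (by simp; omega)]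
    have eD : ((Finset.Icc 1 i).filter
        (fun j => hammingDist u (P.getVert (j-1)) = hammingDist u (P.getVert j) + 1)).card
        = ((Finset.Icc 1 (i-1)).filter
        (fun j => hammingDist u (P.getVert (j-1)) = hammingDist u (P.getVert j) + 1)).card := by
      rw [hins, Finset.filter_insert, if_neg (by omega)]
    refine le_trans (min_le_left _ _) ?_
    rcases hstar with ⟨e, hU⟩ | ⟨e, hU⟩ <;> omega
  · -- step i is a down arrow: min is the level of vertex i
    have eU : ((Finset.Icc 1 i).filter
        (fun j => hammingDist u (P.getVert j) = hammingDist u (P.getVert (j-1)) + 1)).card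
        = ((Finset.Icc 1 (i-1)).filter
        (fun j => hammingDist u (P.getVert j) = hammingDist u (P.getVert (j-1)) + 1)).card := by
      rw [hins, Finset.filter_insert, if_neg (by omega)]
    have eD : ((Finset.Icc 1 i).filter
        (fun j => hammingDist u (P.getVert (j-1)) = hammingDist u (P.getVert j) + 1)).card
        = ((Finset.Icc 1 (i-1)).filter
        (fun j => hammingDist u (P.getVert (j-1)) = hammingDist u (P.getVert j) + 1)).card + 1 := by
      rw [hins, Finset.filter_insert, if_pos h, Finset.card_insert_of_notMem (by simp; omega)]
    refine le_trans (min_le_right _ _) ?_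
    rcases hstar with ⟨e, hU⟩ | ⟨e, hU⟩ <;> omega
end

section
/- Let H be a Hermitian 2^n × 2^n matrix indexed by {0,1}^n that is stoquastic, i.e. ⟨x|H|y⟩ is real and ≤ 0 for all x ≠ y, and m-local in the sense that ⟨x|H|y⟩ = 0 whenever d(x,y) > m. Suppose the smallest eigenvalue E₀ of H is simple with a normalized eigenvector ψ satisfying ψ(x) > 0 for all x, and that the second smallest eigenvalue of H is at least E₀ + γ for some γ > 0. Set π(x) = ψ(x)², N = ∑_{k=1}^m C(n,k), and sensitivity s = max over pairs x ≠ y with ⟨x|H|y⟩ ≠ 0 of |⟨x|H|y⟩|·ψ(x)/ψ(y). Let P be the level-m transition matrix: P(x,y) = (1/N)·π(y)/(π(x)+π(y)) if 1 ≤ d(x,y) ≤ m, P(x,x) = (1/N)·∑_{x' : 1 ≤ d(x,x') ≤ m} π(x)/(π(x)+π(x')), and P(x,y) = 0 otherwise. Then the second largest eigenvalue λ₁ of P satisfies 1 − λ₁ ≥ γ/(2Ns); equivalently, the relaxation time τ = 1/(1 − λ₁) is at most 2Ns/γ. -/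
open Matrix Finset


lemma aux_sphere_card (n : ℕ) (x : Fin n → Bool) (k : ℕ) :
    (Finset.univ.filter fun y => hammingDist x y = k).card = n.choose k := by
  classical
  have : (Finset.univ.filter fun y => hammingDist x y = k).card
      = (Finset.powersetCard k (Finset.univ : Finset (Fin n))).card := by
    apply Finset.card_nbij' (i := fun y => Finset.univ.filter fun i => x i ≠ y i)
      (j := fun S => fun i => xor (x i) (decide (i ∈ S)))
    · intro y hy
      simp only [Finset.mem_coe, mem_filter, mem_univ, true_and] at hy
      simp [Finset.mem_powersetCard]
      exact hy
    · intro S hS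
      simp only [Finset.mem_coe, Finset.mem_powersetCard] at hS
      simp only [Finset.mem_coe, mem_filter, mem_univ, true_and, hammingDist]
      rw [← hS.2]
      congr 1
      ext i
      simp only [mem_filter, mem_univ, true_and]
      cases h : x i <;> by_cases hi : i ∈ S <;> simp [h, hi]
    · intro y hy
      funext i
      cases h : x i <;> by_cases hxy : x i = y i <;>
        simp [h, hxy] <;> simp [h] at hxy <;> simp [hxy]
    · intro S hS
      ext i
      simp only [mem_filter, mem_univ, true_and]
      cases h : x i <;> by_cases hi : i ∈ S <;> simp [h, hi]
  rw [this, Finset.card_powersetCard]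
  simp

lemma aux_ball_card (n m : ℕ) (x : Fin n → Bool) :
    ((Finset.univ.filter fun y =>
      1 ≤ hammingDist x y ∧ hammingDist x y ≤ m).card : ℝ)
      = ∑ k ∈ Finset.Icc 1 m, (n.choose k : ℝ) := by
  classical
  have key : (Finset.univ.filter fun y =>
      1 ≤ hammingDist x y ∧ hammingDist x y ≤ m).card
      = ∑ k ∈ Finset.Icc 1 m, n.choose k := by
    rw [Finset.card_eq_sum_card_fiberwise
      (f := fun y => hammingDist x y) (t := Finset.Icc 1 m) ?_]
    · refine Finset.sum_congr rfl fun k hk => ?_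
      simp only [Finset.mem_Icc] at hk
      rw [← aux_sphere_card n x k]
      apply congrArg Finset.card
      ext y
      simp only [mem_filter, mem_univ, true_and]
      constructor
      · rintro ⟨_, h⟩; exact h
      · rintro h; exact ⟨⟨h ▸ hk.1, h ▸ hk.2⟩, h⟩
    · intro y hy
      simp only [Finset.mem_coe, mem_filter, mem_univ, true_and] at hy
      simpa [Finset.mem_Icc] using hy
  rw [key]
  push_cast
  rfl

lemma aux_step (n : ℕ) (x y : Fin n → Bool) (hxy : x ≠ y) :
    ∃ z : Fin n → Bool, hammingDist x z = 1 ∧ hammingDist z y + 1 = hammingDist x y := by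
  classical
  obtain ⟨i, hi⟩ := Function.ne_iff.mp hxy
  refine ⟨Function.update x i (y i), ?_, ?_⟩
  · rw [show (1:ℕ) = ({i} : Finset (Fin n)).card by simp, hammingDist]
    congr 1
    ext j
    simp only [mem_filter, mem_univ, true_and, Finset.mem_singleton]
    by_cases hj : j = i
    · subst hj; simp [Function.update_self, hi]
    · simp [Function.update_of_ne hj, hj]
  · rw [hammingDist, hammingDist]
    have : (Finset.univ.filter fun j => x j ≠ y j)
        = insert i (Finset.univ.filter fun j => Function.update x i (y i) j ≠ y j) := by
      ext j
      simp only [mem_filter, mem_univ, true_and, Finset.mem_insert]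
      by_cases hj : j = i
      · subst hj; simp [hi]
      · simp [Function.update_of_ne hj, hj]
    rw [this, Finset.card_insert_of_notMem (by simp)]

/-- For the unique ground state `ψ > 0` of a gapped `m`-local stoquastic
Hamiltonian `H` with spectral gap `γ` and sensitivity `s`, the level-`m` walk `P` built
from `π = ψ²` has spectral gap at least `γ/(2Ns)`: every eigenvalue of `P` other than `1`
is at most `1 - γ/(2Ns)`, and the eigenvalue-`1` eigenspace consists of the constant
vectors. Equivalently, the relaxation time `τ = 1/(1-λ₁)` is at most `2Ns/γ`. -/
theorem stmt_14 (n m : ℕ) (hm1 : 1 ≤ m) (hmn : m ≤ n)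
    (H : Matrix (Fin n → Bool) (Fin n → Bool) ℂ)
    (hHherm : H.IsHermitian)
    (hstoq : ∀ x y, x ≠ y → (H x y).im = 0 ∧ (H x y).re ≤ 0)
    (hlocal : ∀ x y, m < hammingDist x y → H x y = 0)
    (E₀ : ℝ) (γ : ℝ) (hγ : 0 < γ)
    (ψ : (Fin n → Bool) → ℝ) (hψpos : ∀ x, 0 < ψ x) (hψnorm : ∑ x, ψ x ^ 2 = 1)
    (hground : H *ᵥ (fun x => (ψ x : ℂ)) = (E₀ : ℂ) • (fun x => (ψ x : ℂ)))
    (hE₀min : ∀ v : (Fin n → Bool) → ℂ,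
      E₀ * ∑ x, ‖v x‖ ^ 2 ≤ (star v ⬝ᵥ (H *ᵥ v)).re)
    (hgap : ∀ v : (Fin n → Bool) → ℂ,
      star (fun x => (ψ x : ℂ)) ⬝ᵥ v = 0 →
      (E₀ + γ) * ∑ x, ‖v x‖ ^ 2 ≤ (star v ⬝ᵥ (H *ᵥ v)).re)
    (π : (Fin n → Bool) → ℝ) (hπ : ∀ x, π x = ψ x ^ 2)
    (N : ℝ) (hN : N = ∑ k ∈ Finset.Icc 1 m, (Nat.choose n k : ℝ))
    (s : ℝ) (hs : s = sSup {r : ℝ | ∃ x y : Fin n → Bool, x ≠ y ∧ H x y ≠ 0 ∧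
      r = ‖H x y‖ * ψ x / ψ y})
    (P : Matrix (Fin n → Bool) (Fin n → Bool) ℝ)
    (hPoff : ∀ x y, 1 ≤ hammingDist x y → hammingDist x y ≤ m →
      P x y = 1 / N * (π y / (π x + π y)))
    (hPdiag : ∀ x, P x x = 1 / N *
      ∑ x' ∈ Finset.univ.filter
        (fun x' => 1 ≤ hammingDist x x' ∧ hammingDist x x' ≤ m),
          π x / (π x + π x'))
    (hPfar : ∀ x y, m < hammingDist x y → P x y = 0) :
    (∀ v : (Fin n → Bool) → ℝ, P *ᵥ v = v → ∃ c : ℝ, v = fun _ => c) ∧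
    (∀ lam : ℝ, (∃ v : (Fin n → Bool) → ℝ, v ≠ 0 ∧ P *ᵥ v = lam • v) →
      lam = 1 ∨ lam ≤ 1 - γ / (2 * N * s)) := by
  classical
  have hψne : ∀ x, ψ x ≠ 0 := fun x => ne_of_gt (hψpos x)
  have hπpos : ∀ x, 0 < π x := fun x => by rw [hπ]; exact pow_pos (hψpos x) 2
  have hπadd : ∀ x y, 0 < π x + π y := fun x y => add_pos (hπpos x) (hπpos y)
  -- H is real
  have hHim : ∀ x y, (H x y).im = 0 := by
    intro x y
    by_cases h : x = y
    · subst h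
      have h2 := hHherm.apply x x
      have := congrArg Complex.im h2
      simp [Complex.conj_im] at this
      linarith
    · exact (hstoq x y h).1
  set Q : Matrix (Fin n → Bool) (Fin n → Bool) ℝ := fun x y => (H x y).re with hQ
  have hQsymm : ∀ x y, Q x y = Q y x := by
    intro x y
    have h2 := hHherm.apply x y
    have := congrArg Complex.re h2
    simpa [Complex.conj_re] using this.symm
  -- real ground state equation
  have hgroundR : ∀ x, ∑ y, Q x y * ψ y = E₀ * ψ x := by
    intro x
    have h1 := congrFun hground x
    simp only [mulVec, dotProduct, Pi.smul_apply, smul_eq_mul] at h1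
    have h2 := congrArg Complex.re h1
    rw [Complex.re_sum] at h2
    convert h2 using 2 with y
    · simp [Complex.mul_re, hHim, hQ]
    · simp [Complex.mul_re]
  -- realification of the quadratic form
  have hre : ∀ g : (Fin n → Bool) → ℝ,
      (star (fun x => ((g x : ℝ) : ℂ)) ⬝ᵥ (H *ᵥ fun x => ((g x : ℝ) : ℂ))).re
        = ∑ x, ∑ y, g x * (Q x y * g y) := by
    intro g
    simp only [dotProduct, mulVec, Pi.star_apply, Complex.star_def, Complex.conj_ofReal]
    rw [Complex.re_sum]
    refine Finset.sum_congr rfl fun x _ => ?_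
    rw [Complex.re_ofReal_mul, Complex.re_sum, Finset.mul_sum]
    refine Finset.sum_congr rfl fun y _ => ?_
    simp [Complex.mul_re, hQ]
  -- Dirichlet identity for H
  have hDir : ∀ f : (Fin n → Bool) → ℝ,
      ∑ x, ∑ y, (ψ x * f x) * (Q x y * (ψ y * f y))
        = E₀ * ∑ x, π x * f x ^ 2
          + (1/2) * ∑ x, ∑ y, (-(Q x y)) * (ψ x * ψ y) * (f x - f y) ^ 2 := by
    intro f
    have hS1 : ∑ x, ∑ y, (-(Q x y)) * (ψ x * ψ y) * f x ^ 2
        = -(E₀ * ∑ x, π x * f x ^ 2) := by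
      have h1 : ∀ x, ∑ y, (-(Q x y)) * (ψ x * ψ y) * f x ^ 2
          = -(E₀ * (π x * f x ^ 2)) := by
        intro x
        have h0 : ∑ y, (-(Q x y)) * (ψ x * ψ y) * f x ^ 2
            = (-(f x ^ 2 * ψ x)) * ∑ y, Q x y * ψ y := by
          rw [Finset.mul_sum]
          exact Finset.sum_congr rfl fun y _ => by ring
        rw [h0, hgroundR x, hπ x]; ring
      rw [Finset.sum_congr rfl fun x _ => h1 x, Finset.sum_neg_distrib, Finset.mul_sum]
    have hS1' : ∑ x, ∑ y, (-(Q x y)) * (ψ x * ψ y) * f y ^ 2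
        = -(E₀ * ∑ x, π x * f x ^ 2) := by
      rw [Finset.sum_comm, ← hS1]
      refine Finset.sum_congr rfl fun x _ => Finset.sum_congr rfl fun y _ => ?_
      rw [hQsymm x y]; ring
    have hT : ∑ x, ∑ y, (-(Q x y)) * (ψ x * ψ y) * (f x * f y)
        = -(∑ x, ∑ y, (ψ x * f x) * (Q x y * (ψ y * f y))) := by
      rw [← Finset.sum_neg_distrib]
      refine Finset.sum_congr rfl fun x _ => ?_
      rw [← Finset.sum_neg_distrib]
      exact Finset.sum_congr rfl fun y _ => by ring
    have hexp : ∑ x, ∑ y, (-(Q x y)) * (ψ x * ψ y) * (f x - f y) ^ 2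
        = (∑ x, ∑ y, (-(Q x y)) * (ψ x * ψ y) * f x ^ 2)
          + (∑ x, ∑ y, (-(Q x y)) * (ψ x * ψ y) * f y ^ 2)
          - 2 * ∑ x, ∑ y, (-(Q x y)) * (ψ x * ψ y) * (f x * f y) := by
      rw [Finset.mul_sum, ← Finset.sum_add_distrib, ← Finset.sum_sub_distrib]
      refine Finset.sum_congr rfl fun x _ => ?_
      rw [Finset.mul_sum, ← Finset.sum_add_distrib, ← Finset.sum_sub_distrib]
      exact Finset.sum_congr rfl fun y _ => by ring
    rw [hexp, hS1, hS1', hT]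
    ring
  -- N basics
  have hNpos : 0 < N := by
    rw [hN]
    have h1 : (0:ℝ) < (n.choose 1 : ℝ) := by
      have : 0 < n.choose 1 := by
        rw [Nat.choose_one_right]; omega
      exact_mod_cast this
    refine lt_of_lt_of_le h1 ?_
    exact Finset.single_le_sum (f := fun k => ((n.choose k : ℕ) : ℝ))
      (fun k _ => by positivity) (Finset.mem_Icc.mpr ⟨le_refl 1, hm1⟩)
  have hNne : N ≠ 0 := ne_of_gt hNpos
  -- row sums of P
  have hrowsum : ∀ x, ∑ y, P x y = 1 := by
    intro x
    rw [← Finset.sum_filter_add_sum_filter_not Finset.univ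
      (fun y => 1 ≤ hammingDist x y ∧ hammingDist x y ≤ m) (fun y => P x y)]
    have h2 : ∑ y ∈ Finset.univ.filter
        (fun y => ¬(1 ≤ hammingDist x y ∧ hammingDist x y ≤ m)), P x y = P x x := by
      refine Finset.sum_eq_single_of_mem x (by simp) ?_
      intro y hy hyx
      simp only [mem_filter, mem_univ, true_and, not_and, not_le] at hy
      have hd1 : 1 ≤ hammingDist x y := by
        have : hammingDist x y ≠ 0 := hammingDist_ne_zero.mpr (Ne.symm hyx)
        omega
      exact hPfar x y (hy hd1)
    rw [h2, hPdiag x]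
    have h3 : ∑ y ∈ Finset.univ.filter
        (fun y => 1 ≤ hammingDist x y ∧ hammingDist x y ≤ m), P x y
        = 1 / N * ∑ y ∈ Finset.univ.filter
          (fun y => 1 ≤ hammingDist x y ∧ hammingDist x y ≤ m), π y / (π x + π y) := by
      rw [Finset.mul_sum]
      refine Finset.sum_congr rfl fun y hy => ?_
      simp only [mem_filter, mem_univ, true_and] at hy
      exact hPoff x y hy.1 hy.2
    rw [h3, ← mul_add, ← Finset.sum_add_distrib]
    have h4 : ∑ y ∈ Finset.univ.filter
        (fun y => 1 ≤ hammingDist x y ∧ hammingDist x y ≤ m),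
        (π y / (π x + π y) + π x / (π x + π y)) = N := by
      have h5 : ∀ y, π y / (π x + π y) + π x / (π x + π y) = 1 := by
        intro y
        rw [← add_div]
        rw [add_comm (π y)]
        exact div_self (ne_of_gt (hπadd x y))
      rw [Finset.sum_congr rfl fun y _ => h5 y, Finset.sum_const, nsmul_eq_mul, mul_one]
      rw [hN, ← aux_ball_card n m x]
    rw [h4]
    field_simp
  -- P is π-reversible
  have hPsymm : ∀ x y, π x * P x y = π y * P y x := by
    intro x y
    by_cases h : x = y
    · subst h; rfl
    · have hd1 : 1 ≤ hammingDist x y := by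
        have : hammingDist x y ≠ 0 := hammingDist_ne_zero.mpr h
        omega
      by_cases hdm : hammingDist x y ≤ m
      · rw [hPoff x y hd1 hdm, hPoff y x (by rwa [hammingDist_comm]) (by rwa [hammingDist_comm])]
        rw [add_comm (π y) (π x)]
        ring
      · rw [hPfar x y (by omega), hPfar y x (by rw [hammingDist_comm]; omega)]
        ring
  have hPnonneg : ∀ x y, 0 ≤ P x y := by
    intro x y
    by_cases h : x = y
    · subst h
      rw [hPdiag x]
      have : (0:ℝ) ≤ ∑ x' ∈ Finset.univ.filter
          (fun x' => 1 ≤ hammingDist x x' ∧ hammingDist x x' ≤ m),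
          π x / (π x + π x') :=
        Finset.sum_nonneg fun y _ => le_of_lt (div_pos (hπpos x) (hπadd x y))
      positivity
    · have hd1 : 1 ≤ hammingDist x y := by
        have : hammingDist x y ≠ 0 := hammingDist_ne_zero.mpr h
        omega
      by_cases hdm : hammingDist x y ≤ m
      · rw [hPoff x y hd1 hdm]
        have := hπpos y
        have := hπadd x y
        positivity
      · rw [hPfar x y (by omega)]
  have hPoffpos : ∀ x y, 1 ≤ hammingDist x y → hammingDist x y ≤ m → 0 < P x y := by
    intro x y h1 h2
    rw [hPoff x y h1 h2]
    have := hπpos y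
    have := hπadd x y
    positivity
  -- Dirichlet identity for P
  have hDirP : ∀ v : (Fin n → Bool) → ℝ,
      (∑ x, π x * v x ^ 2) - ∑ x, ∑ y, π x * P x y * (v x * v y)
        = (1/2) * ∑ x, ∑ y, π x * P x y * (v x - v y) ^ 2 := by
    intro v
    have hB1 : ∑ x, ∑ y, π x * P x y * v x ^ 2 = ∑ x, π x * v x ^ 2 := by
      refine Finset.sum_congr rfl fun x _ => ?_
      have : ∑ y, π x * P x y * v x ^ 2 = (π x * v x ^ 2) * ∑ y, P x y := by
        rw [Finset.mul_sum]
        exact Finset.sum_congr rfl fun y _ => by ring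
      rw [this, hrowsum x, mul_one]
    have hB2 : ∑ x, ∑ y, π x * P x y * v y ^ 2 = ∑ x, π x * v x ^ 2 := by
      rw [Finset.sum_comm, ← hB1]
      refine Finset.sum_congr rfl fun x _ => Finset.sum_congr rfl fun y _ => ?_
      rw [show π y * P y x = π x * P x y from (hPsymm x y).symm]
    have hexp : ∑ x, ∑ y, π x * P x y * (v x - v y) ^ 2
        = (∑ x, ∑ y, π x * P x y * v x ^ 2)
          + (∑ x, ∑ y, π x * P x y * v y ^ 2)
          - 2 * ∑ x, ∑ y, π x * P x y * (v x * v y) := by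
      rw [Finset.mul_sum, ← Finset.sum_add_distrib, ← Finset.sum_sub_distrib]
      refine Finset.sum_congr rfl fun x _ => ?_
      rw [Finset.mul_sum, ← Finset.sum_add_distrib, ← Finset.sum_sub_distrib]
      exact Finset.sum_congr rfl fun y _ => by ring
    rw [hexp, hB1, hB2]
    ring
  -- inner product with eigenvector
  have hinner : ∀ (v : (Fin n → Bool) → ℝ) (lam : ℝ), P *ᵥ v = lam • v →
      ∑ x, ∑ y, π x * P x y * (v x * v y) = lam * ∑ x, π x * v x ^ 2 := by
    intro v lam hv
    have h1 : ∀ x, ∑ y, π x * P x y * (v x * v y) = π x * v x * (lam * v x) := by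
      intro x
      have h2 : ∑ y, π x * P x y * (v x * v y) = (π x * v x) * ∑ y, P x y * v y := by
        rw [Finset.mul_sum]
        exact Finset.sum_congr rfl fun y _ => by ring
      have h3 : ∑ y, P x y * v y = lam * v x := by
        have := congrFun hv x
        simpa [mulVec, dotProduct] using this
      rw [h2, h3]
    rw [Finset.sum_congr rfl fun x _ => h1 x, Finset.mul_sum]
    exact Finset.sum_congr rfl fun x _ => by ring
  -- orthogonality to π for lam ≠ 1
  have horthR : ∀ (v : (Fin n → Bool) → ℝ) (lam : ℝ), P *ᵥ v = lam • v → lam ≠ 1 →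
      ∑ x, π x * v x = 0 := by
    intro v lam hv hlam
    have h1 : ∑ x, π x * (lam * v x) = ∑ x, π x * v x := by
      calc ∑ x, π x * (lam * v x) = ∑ x, π x * ∑ y, P x y * v y := by
            refine Finset.sum_congr rfl fun x _ => ?_
            have := congrFun hv x
            simp only [mulVec, dotProduct, Pi.smul_apply, smul_eq_mul] at this
            rw [this]
        _ = ∑ x, ∑ y, π x * P x y * v y := by
            refine Finset.sum_congr rfl fun x _ => ?_
            rw [Finset.mul_sum]
            exact Finset.sum_congr rfl fun y _ => by ring
        _ = ∑ y, ∑ x, π x * P x y * v y := Finset.sum_comm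
        _ = ∑ y, π y * v y := by
            refine Finset.sum_congr rfl fun y _ => ?_
            have : ∑ x, π x * P x y * v y = (∑ x, P y x) * (π y * v y) := by
              rw [Finset.sum_mul]
              refine Finset.sum_congr rfl fun x _ => ?_
              rw [show π x * P x y = π y * P y x from hPsymm x y]; ring
            rw [this, hrowsum y, one_mul]
    have h2 : lam * ∑ x, π x * v x = ∑ x, π x * v x := by
      rw [Finset.mul_sum, ← h1]
      exact Finset.sum_congr rfl fun x _ => by ring
    by_contra hne
    have h3 : lam * (∑ x, π x * v x) = 1 * (∑ x, π x * v x) := by rw [h2, one_mul]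
    exact hlam (mul_right_cancel₀ hne h3)
  -- the sensitivity set
  set S : Set ℝ := {r : ℝ | ∃ x y : Fin n → Bool, x ≠ y ∧ H x y ≠ 0 ∧
      r = ‖H x y‖ * ψ x / ψ y} with hSdef
  have hSfin : S.Finite := by
    apply Set.Finite.subset (Set.finite_range
      (fun p : (Fin n → Bool) × (Fin n → Bool) => ‖H p.1 p.2‖ * ψ p.1 / ψ p.2))
    rintro r ⟨x, y, -, -, rfl⟩
    exact ⟨(x, y), rfl⟩
  have hSne : S.Nonempty := by
    by_contra hSe
    have hzero : ∀ x y : Fin n → Bool, x ≠ y → H x y = 0 := by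
      intro x y hxy
      by_contra hne
      exact hSe ⟨‖H x y‖ * ψ x / ψ y, x, y, hxy, hne, rfl⟩
    have hdiagE : ∀ x, H x x = (E₀ : ℂ) := by
      intro x
      have h1 := hgroundR x
      have h2 : ∑ y, Q x y * ψ y = Q x x * ψ x := by
        refine Finset.sum_eq_single x (fun y _ hyx => ?_) (by simp)
        have : H x y = 0 := hzero x y (Ne.symm hyx)
        simp [hQ, this]
      rw [h2] at h1
      have h3 : Q x x = E₀ := by
        have := mul_right_cancel₀ (hψne x) h1
        exact this
      apply Complex.ext
      · simpa [hQ] using h3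
      · simp [hHim x x]
    have hn0 : 0 < n := by omega
    set a : Fin n → Bool := fun _ => false with ha
    set b : Fin n → Bool := fun _ => true with hb
    have hab : a ≠ b := by
      intro h
      have := congrFun h ⟨0, hn0⟩
      simp [ha, hb] at this
    set v : (Fin n → Bool) → ℂ :=
      fun x => if x = a then ((ψ b : ℝ) : ℂ) else if x = b then -((ψ a : ℝ) : ℂ) else 0 with hv
    have hsum2 : ∀ f : (Fin n → Bool) → ℂ, (∀ x, x ≠ a → x ≠ b → f x = 0) →
        ∑ x, f x = f a + f b := by
      intro f hf
      calc ∑ x, f x = ∑ x ∈ ({a, b} : Finset (Fin n → Bool)), f x := by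
            symm
            refine Finset.sum_subset (Finset.subset_univ _) fun x _ hx => ?_
            simp only [Finset.mem_insert, Finset.mem_singleton] at hx
            push_neg at hx
            exact hf x hx.1 hx.2
        _ = f a + f b := Finset.sum_pair hab
    have horth0 : star (fun x => ((ψ x : ℝ) : ℂ)) ⬝ᵥ v = 0 := by
      simp only [dotProduct, Pi.star_apply, Complex.star_def, Complex.conj_ofReal]
      rw [hsum2 (fun x => ((ψ x : ℝ) : ℂ) * v x)
        (fun x hx1 hx2 => by simp [hv, hx1, hx2])]
      simp [hv, hab, Ne.symm hab]
      ring
    have hHvx : H *ᵥ v = fun x => (E₀ : ℂ) * v x := by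
      funext x
      simp only [mulVec, dotProduct]
      rw [Finset.sum_eq_single x (fun y _ hyx => by
        rw [hzero x y (Ne.symm hyx), zero_mul]) (by simp)]
      rw [hdiagE x]
    have hrhs : (star v ⬝ᵥ (H *ᵥ v)).re = E₀ * ∑ x, ‖v x‖ ^ 2 := by
      rw [hHvx]
      simp only [dotProduct, Pi.star_apply, Complex.star_def]
      rw [Complex.re_sum, Finset.mul_sum]
      refine Finset.sum_congr rfl fun x _ => ?_
      have h5 : (starRingEnd ℂ) (v x) * ((E₀ : ℂ) * v x)
          = (E₀ : ℂ) * ((Complex.normSq (v x) : ℝ) : ℂ) := by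
        rw [← Complex.mul_conj]
        ring
      rw [h5, Complex.re_ofReal_mul, Complex.sq_norm, Complex.ofReal_re]
    have hTpos0 : 0 < ∑ x, ‖v x‖ ^ 2 := by
      have h6 : 0 < ‖v a‖ ^ 2 := by
        have : v a = ((ψ b : ℝ) : ℂ) := by simp [hv]
        rw [this, Complex.norm_real, Real.norm_eq_abs, sq_abs]
        exact pow_pos (hψpos b) 2
      exact lt_of_lt_of_le h6 (Finset.single_le_sum
        (f := fun x => ‖v x‖ ^ 2) (fun x _ => by positivity) (mem_univ a))
    have hg2 := hgap v horth0
    rw [hrhs] at hg2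
    nlinarith [hg2, hTpos0, hγ]
  have hmem : s ∈ S := hs ▸ hSne.csSup_mem hSfin
  have hspos : 0 < s := by
    obtain ⟨x, y, hxy, hne, hr⟩ := hmem
    rw [hr]
    have h1 : 0 < ‖H x y‖ := norm_pos_iff.mpr hne
    exact div_pos (mul_pos h1 (hψpos x)) (hψpos y)
  have hsub : ∀ x y : Fin n → Bool, x ≠ y → ‖H x y‖ * ψ x / ψ y ≤ s := by
    intro x y hxy
    by_cases hne : H x y = 0
    · rw [hne]
      simp
      positivity
    · rw [hs]
      exact le_csSup hSfin.bddAbove ⟨x, y, hxy, hne, rfl⟩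
  have habs_symm : ∀ x y, ‖H y x‖ = ‖H x y‖ := by
    intro x y
    rw [← hHherm.apply y x, Complex.star_def, Complex.norm_conj]
  -- comparison of quadratic forms
  have hcomp : ∀ x y, x ≠ y → (-(Q x y)) * (ψ x * ψ y) ≤ 2 * N * s * (π x * P x y) := by
    intro x y hxy
    by_cases hdm : hammingDist x y ≤ m
    · have hd1 : 1 ≤ hammingDist x y := by
        have : hammingDist x y ≠ 0 := hammingDist_ne_zero.mpr hxy
        omega
      have h1 := hsub x y hxy
      have h2 : ‖H x y‖ * ψ y / ψ x ≤ s := by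
        have := hsub y x (Ne.symm hxy)
        rwa [habs_symm x y] at this
      set a := ‖H x y‖ with hadef
      have hQa : -(Q x y) ≤ a := by
        refine le_trans (neg_le_abs _) ?_
        exact Complex.abs_re_le_norm (H x y)
      rw [div_le_iff₀ (hψpos y)] at h1
      rw [div_le_iff₀ (hψpos x)] at h2
      have h1' : a * ψ x * ψ y ≤ s * π y := by
        calc a * ψ x * ψ y ≤ (s * ψ y) * ψ y :=
              mul_le_mul_of_nonneg_right h1 (le_of_lt (hψpos y))
          _ = s * π y := by rw [hπ y]; ring
      have h2' : a * ψ x * ψ y ≤ s * π x := by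
        calc a * ψ x * ψ y = (a * ψ y) * ψ x := by ring
          _ ≤ (s * ψ x) * ψ x := mul_le_mul_of_nonneg_right h2 (le_of_lt (hψpos x))
          _ = s * π x := by rw [hπ x]; ring
      have hgoal : -(Q x y) * (ψ x * ψ y) ≤ 2 * s * (π x * π y) / (π x + π y) := by
        rw [le_div_iff₀ (hπadd x y)]
        have hA : -(Q x y) * (ψ x * ψ y) ≤ a * (ψ x * ψ y) :=
          mul_le_mul_of_nonneg_right hQa (le_of_lt (mul_pos (hψpos x) (hψpos y)))
        nlinarith [mul_le_mul_of_nonneg_right hA (le_of_lt (hπpos x)),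
          mul_le_mul_of_nonneg_right hA (le_of_lt (hπpos y)),
          mul_le_mul_of_nonneg_right h1' (le_of_lt (hπpos x)),
          mul_le_mul_of_nonneg_right h2' (le_of_lt (hπpos y))]
      rw [hPoff x y hd1 hdm]
      have heq : 2 * N * s * (π x * (1 / N * (π y / (π x + π y))))
          = 2 * s * (π x * π y) / (π x + π y) := by
        have h9 : π x + π y ≠ 0 := ne_of_gt (hπadd x y)
        field_simp
      rw [heq]
      exact hgoal
    · rw [hPfar x y (by omega)]
      have hH0 : H x y = 0 := hlocal x y (by omega)
      simp [hQ, hH0]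
  -- the main eigenvalue bound
  have hmain : ∀ (v : (Fin n → Bool) → ℝ) (lam : ℝ), v ≠ 0 → P *ᵥ v = lam • v →
      lam ≠ 1 → γ ≤ 2 * N * s * (1 - lam) := by
    intro v lam hv0 hv hlam
    have horth := horthR v lam hv hlam
    have horthC : star (fun x => ((ψ x : ℝ) : ℂ)) ⬝ᵥ (fun x => ((ψ x * v x : ℝ) : ℂ)) = 0 := by
      simp only [dotProduct, Pi.star_apply, Complex.star_def, Complex.conj_ofReal]
      have h0 : ∀ x : Fin n → Bool, (((ψ x : ℝ) : ℂ) * ((ψ x * v x : ℝ) : ℂ))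
          = ((π x * v x : ℝ) : ℂ) := by
        intro x
        rw [hπ x]
        push_cast
        ring
      rw [Finset.sum_congr rfl fun x _ => h0 x, ← Complex.ofReal_sum, horth]
      simp
    have hgap2 := hgap (fun x => ((ψ x * v x : ℝ) : ℂ)) horthC
    have habs : ∑ x, ‖((ψ x * v x : ℝ) : ℂ)‖ ^ 2 = ∑ x, π x * v x ^ 2 := by
      refine Finset.sum_congr rfl fun x _ => ?_
      rw [Complex.norm_real, Real.norm_eq_abs, sq_abs, hπ x]
      ring
    rw [hre (fun x => ψ x * v x), habs, hDir v] at hgap2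
    set T := ∑ x, π x * v x ^ 2 with hT
    set Dq := ∑ x, ∑ y, (-(Q x y)) * (ψ x * ψ y) * (v x - v y) ^ 2 with hDq
    set Dp := ∑ x, ∑ y, π x * P x y * (v x - v y) ^ 2 with hDp
    have hEbound : Dq ≤ (2 * N * s) * Dp := by
      calc Dq ≤ ∑ x, ∑ y, (2 * N * s * (π x * P x y)) * (v x - v y) ^ 2 := by
            refine Finset.sum_le_sum fun x _ => Finset.sum_le_sum fun y _ => ?_
            by_cases hxy : x = y
            · subst hxy; simp
            · exact mul_le_mul_of_nonneg_right (hcomp x y hxy) (sq_nonneg _)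
        _ = (2 * N * s) * Dp := by
            rw [hDp, Finset.mul_sum]
            refine Finset.sum_congr rfl fun x _ => ?_
            rw [Finset.mul_sum]
            exact Finset.sum_congr rfl fun y _ => by ring
    have hDv := hDirP v
    rw [hinner v lam hv] at hDv
    have hDpval : Dp = 2 * (T - lam * T) := by
      rw [hDp, hT]
      linarith [hDv]
    have hTpos : 0 < T := by
      rw [hT]
      obtain ⟨x0, hx0⟩ := Function.ne_iff.mp hv0
      have h8 : 0 < v x0 ^ 2 :=
        lt_of_le_of_ne (sq_nonneg _) (Ne.symm (pow_ne_zero 2 hx0))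
      exact lt_of_lt_of_le (mul_pos (hπpos x0) h8) (Finset.single_le_sum
        (f := fun x => π x * v x ^ 2)
        (fun x _ => mul_nonneg (hπpos x).le (sq_nonneg _)) (mem_univ x0))
    have h7 : γ * T ≤ (2 * N * s * (1 - lam)) * T := by
      calc γ * T = (E₀ + γ) * T - E₀ * T := by ring
        _ ≤ (1/2) * Dq := by linarith [hgap2]
        _ ≤ (1/2) * ((2 * N * s) * Dp) := by linarith [hEbound]
        _ = (2 * N * s * (1 - lam)) * T := by rw [hDpval]; ring
    exact le_of_mul_le_mul_right h7 hTpos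
  constructor
  · -- part 1: eigenvalue-1 eigenvectors are constant
    intro v hv
    have hv1 : P *ᵥ v = (1 : ℝ) • v := by rw [one_smul]; exact hv
    have hDv := hDirP v
    rw [hinner v 1 hv1, one_mul] at hDv
    have hzero : ∑ x, ∑ y, π x * P x y * (v x - v y) ^ 2 = 0 := by linarith
    have hterm : ∀ x y, π x * P x y * (v x - v y) ^ 2 = 0 := by
      intro x y
      have hnn : ∀ x y : Fin n → Bool, 0 ≤ π x * P x y * (v x - v y) ^ 2 :=
        fun x y => mul_nonneg (mul_nonneg (hπpos x).le (hPnonneg x y)) (sq_nonneg _)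
      have h1 := (Finset.sum_eq_zero_iff_of_nonneg
        (fun x _ => Finset.sum_nonneg fun y _ => hnn x y)).mp hzero x (mem_univ x)
      exact (Finset.sum_eq_zero_iff_of_nonneg
        (fun y _ => hnn x y)).mp h1 y (mem_univ y)
    have hedge : ∀ x y, hammingDist x y = 1 → v x = v y := by
      intro x y hd
      have hp : 0 < π x * P x y :=
        mul_pos (hπpos x) (hPoffpos x y (by omega) (by omega))
      have h2 : (v x - v y) ^ 2 = 0 := by
        by_contra h3
        have h4 : 0 < (v x - v y) ^ 2 := lt_of_le_of_ne (sq_nonneg _) (Ne.symm h3)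
        nlinarith [hterm x y]
      have h5 : v x - v y = 0 := by
        exact pow_eq_zero_iff (by norm_num) |>.mp h2
      linarith
    have hconst : ∀ (k : ℕ) (x y : Fin n → Bool), hammingDist x y = k → v x = v y := by
      intro k
      induction k with
      | zero => intro x y h; rw [hammingDist_eq_zero.mp h]
      | succ k ih =>
        intro x y h
        have hxy : x ≠ y := by
          intro he; subst he; simp [hammingDist_self] at h
        obtain ⟨z, hz1, hz2⟩ := aux_step n x y hxy
        have hzk : hammingDist z y = k := by omega
        rw [hedge x z hz1, ih z y hzk]
    exact ⟨v (fun _ => false), funext fun x => hconst _ x _ rfl⟩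
  · -- part 2: eigenvalue bound
    rintro lam ⟨v, hv0, hv⟩
    by_cases hlam : lam = 1
    · exact Or.inl hlam
    · right
      have h := hmain v lam hv0 hv hlam
      have hNs : (0:ℝ) < 2 * N * s := by
        have := mul_pos (mul_pos (by norm_num : (0:ℝ) < 2) hNpos) hspos
        exact this
      have h2 : γ / (2 * N * s) ≤ 1 - lam := by
        rw [div_le_iff₀ hNs]
        calc γ ≤ 2 * N * s * (1 - lam) := h
          _ = (1 - lam) * (2 * N * s) := by ring
      linarith
end

section
/- Let ψ, ψ' : {0,1}^n → ℂ be functions with ψ(x) ≠ 0 and ψ'(x) ≠ 0 for all x, written as ψ(x) = |ψ(x)|·e^{iφ(x)} and ψ'(x) = |ψ'(x)|·e^{iφ'(x)}. Suppose there is ε ≥ 0 such that for every x ∈ {0,1}^n: |log|ψ(x)| − log|ψ'(x)|| ≤ ε/2 and |φ(x) − φ'(x)| ≤ ε/2. Then |⟨ψ', ψ⟩|² / (⟨ψ, ψ⟩·⟨ψ', ψ'⟩) ≥ 1 − ε², where ⟨ψ', ψ⟩ = ∑_{x∈{0,1}^n} conj(ψ'(x))·ψ(x). -/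
open Complex Finset

set_option maxHeartbeats 1600000 in
/-- If the log-magnitudes and phases of the (nowhere-vanishing)
amplitude functions `ψ` and `ψ'` agree pointwise up to `ε/2`, then the fidelity of the
corresponding normalized states is at least `1 - ε²`. -/
theorem stmt_15 (n : ℕ)
    (ψ ψ' : (Fin n → Bool) → ℂ)
    (hψ : ∀ x, ψ x ≠ 0) (hψ' : ∀ x, ψ' x ≠ 0)
    (φ φ' : (Fin n → Bool) → ℝ)
    (hphase : ∀ x, ψ x = (‖ψ x‖ : ℝ) * Complex.exp (Complex.I * (φ x : ℝ)))
    (hphase' : ∀ x, ψ' x = (‖ψ' x‖ : ℝ) * Complex.exp (Complex.I * (φ' x : ℝ)))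
    (ε : ℝ) (hε : 0 ≤ ε)
    (hmag : ∀ x, |Real.log (‖ψ x‖) - Real.log (‖ψ' x‖)| ≤ ε / 2)
    (hph : ∀ x, |φ x - φ' x| ≤ ε / 2) :
    1 - ε ^ 2 ≤
      ‖∑ x, starRingEnd ℂ (ψ' x) * ψ x‖ ^ 2 /
        ((∑ x, ‖ψ x‖ ^ 2) * (∑ x, ‖ψ' x‖ ^ 2)) := by
  by_cases hε1 : 1 ≤ ε
  · have h0 : 1 - ε ^ 2 ≤ 0 := by nlinarith
    refine h0.trans ?_
    positivity
  push_neg at hε1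
  have hs0 : 0 ≤ ε / 2 := by positivity
  have hs2 : ε / 2 ≤ 1 / 2 := by linarith
  set a : (Fin n → Bool) → ℝ := fun x => ‖ψ x‖ with ha_def
  set b : (Fin n → Bool) → ℝ := fun x => ‖ψ' x‖ with hb_def
  have ha : ∀ x, 0 < a x := fun x => norm_pos_iff.mpr (hψ x)
  have hb : ∀ x, 0 < b x := fun x => norm_pos_iff.mpr (hψ' x)
  -- term computation
  have hterm : ∀ x, starRingEnd ℂ (ψ' x) * ψ x
      = ((a x * b x : ℝ) : ℂ) * Complex.exp (Complex.I * ((φ x - φ' x : ℝ) : ℂ)) := by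
    intro x
    rw [hphase x, hphase' x]
    rw [map_mul, ← Complex.exp_conj]
    simp only [Complex.conj_ofReal, map_mul, Complex.conj_I]
    calc (b x : ℂ) * cexp (-I * ↑(φ' x)) * (↑(a x) * cexp (I * ↑(φ x)))
        = ((a x * b x : ℝ) : ℂ) * cexp (-I * ↑(φ' x) + I * ↑(φ x)) := by
          rw [Complex.exp_add]; push_cast; ring
      _ = ((a x * b x : ℝ) : ℂ) * cexp (I * ((φ x - φ' x : ℝ) : ℂ)) := by
          push_cast; ring_nf
  -- real part of the sum
  have hre : (∑ x, starRingEnd ℂ (ψ' x) * ψ x).re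
      = ∑ x, a x * b x * Real.cos (φ x - φ' x) := by
    rw [Complex.re_sum]
    refine Finset.sum_congr rfl fun x _ => ?_
    rw [hterm x, Complex.re_ofReal_mul, mul_comm Complex.I, Complex.exp_ofReal_mul_I_re]
  -- cos bound pointwise
  have hcs : ∀ x, Real.cos (ε / 2) ≤ Real.cos (φ x - φ' x) := by
    intro x
    rw [← Real.cos_abs (φ x - φ' x)]
    refine Real.cos_le_cos_of_nonneg_of_le_pi (abs_nonneg _) ?_ (hph x)
    linarith [Real.pi_gt_three]
  obtain ⟨c, hc_def⟩ : ∃ y, Real.cos (ε / 2) = y := ⟨_, rfl⟩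
  rw [hc_def] at hcs
  have hcos_lb : 1 - (ε / 2) ^ 2 / 2 ≤ c := hc_def ▸ Real.one_sub_sq_div_two_le_cos
  have hcos_pos : (0:ℝ) < c := by nlinarith
  obtain ⟨S, hS_def⟩ : ∃ y, (∑ x, a x * b x) = y := ⟨_, rfl⟩
  have hS_pos : 0 < S := by
    rw [← hS_def]
    exact Finset.sum_pos (fun x _ => mul_pos (ha x) (hb x)) univ_nonempty
  obtain ⟨N, hN_def⟩ : ∃ y, ‖∑ x, starRingEnd ℂ (ψ' x) * ψ x‖ = y := ⟨_, rfl⟩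
  rw [hN_def]
  have hNnn : 0 ≤ N := hN_def ▸ norm_nonneg _
  have hN_ge : c * S ≤ N := by
    have h1 : (∑ x, starRingEnd ℂ (ψ' x) * ψ x).re ≤ N := by
      rw [← hN_def]
      exact le_trans (le_abs_self _) (Complex.abs_re_le_norm _)
    refine le_trans ?_ h1
    rw [hre, ← hS_def, Finset.mul_sum]
    refine Finset.sum_le_sum fun x _ => ?_
    have h2 := hcs x
    have h3 := mul_pos (ha x) (hb x)
    nlinarith
  -- magnitude relation
  obtain ⟨E, hE_def⟩ : ∃ y, Real.exp (ε / 2) = y := ⟨_, rfl⟩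
  obtain ⟨E', hE'_def⟩ : ∃ y, Real.exp (-(ε / 2)) = y := ⟨_, rfl⟩
  have hE1 : 1 ≤ E := hE_def ▸ Real.one_le_exp hs0
  have hE0 : (0:ℝ) < E := by linarith
  have hE'0 : (0:ℝ) < E' := hE'_def ▸ Real.exp_pos _
  have hEE : E * E' = 1 := by
    rw [← hE_def, ← hE'_def, ← Real.exp_add]; simp
  have hpt : ∀ x, a x ^ 2 + b x ^ 2 ≤ (E + E') * (a x * b x) := by
    intro x
    have hm := abs_le.mp (hmag x)
    have hab : a x ≤ E * b x := by
      have h1 : a x / b x = Real.exp (Real.log (a x) - Real.log (b x)) := by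
        rw [Real.exp_sub, Real.exp_log (ha x), Real.exp_log (hb x)]
      have h2 : a x / b x ≤ E := by
        rw [h1, ← hE_def]; exact Real.exp_le_exp.mpr hm.2
      exact (div_le_iff₀ (hb x)).mp h2
    have hba : b x ≤ E * a x := by
      have h1 : b x / a x = Real.exp (Real.log (b x) - Real.log (a x)) := by
        rw [Real.exp_sub, Real.exp_log (hb x), Real.exp_log (ha x)]
      have h2 : b x / a x ≤ E := by
        rw [h1, ← hE_def]
        refine Real.exp_le_exp.mpr (by linarith [hm.1])
      exact (div_le_iff₀ (ha x)).mp h2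
    have hkey : 0 ≤ (E * b x - a x) * (E * a x - b x) := by
      nlinarith
    nlinarith [mul_nonneg hkey hE'0.le, hEE, mul_pos (ha x) (hb x),
      mul_le_mul_of_nonneg_left hab hE'0.le, mul_le_mul_of_nonneg_left hba hE'0.le]
  obtain ⟨Sa, hSa_def⟩ : ∃ y, (∑ x, ‖ψ x‖ ^ 2) = y := ⟨_, rfl⟩
  obtain ⟨Sb, hSb_def⟩ : ∃ y, (∑ x, ‖ψ' x‖ ^ 2) = y := ⟨_, rfl⟩
  rw [hSa_def, hSb_def]
  have hSa_pos : 0 < Sa := by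
    rw [← hSa_def]
    exact Finset.sum_pos (fun x _ => pow_pos (ha x) 2) univ_nonempty
  have hSb_pos : 0 < Sb := by
    rw [← hSb_def]
    exact Finset.sum_pos (fun x _ => pow_pos (hb x) 2) univ_nonempty
  have hsum_le : Sa + Sb ≤ (E + E') * S := by
    rw [← hSa_def, ← hSb_def, ← hS_def, Finset.mul_sum, ← Finset.sum_add_distrib]
    exact Finset.sum_le_sum fun x _ => hpt x
  set K := E + E' with hK_def
  clear_value K
  have hK_pos : 0 < K := by rw [hK_def]; linarith
  have hprod : Sa * Sb ≤ (K / 2) ^ 2 * S ^ 2 := by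
    have hpos : (0:ℝ) ≤ Sa + Sb := by linarith
    have hsq : (Sa + Sb) * (Sa + Sb) ≤ (K * S) * (K * S) :=
      mul_self_le_mul_self hpos hsum_le
    nlinarith [sq_nonneg (Sa - Sb)]
  -- analytic bound : c ^ 2 ≥ (1 - ε^2) * (K/2)^2
  have hKle : K / 2 ≤ 1 / (1 - (ε / 2) ^ 2) := by
    have h1 : 1 - ε / 2 ≤ E' := by
      rw [← hE'_def]
      have := Real.add_one_le_exp (-(ε / 2)); linarith
    have h2 : 1 + ε / 2 ≤ E := by
      rw [← hE_def]
      have := Real.add_one_le_exp (ε / 2); linarith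
    have h3 : (0:ℝ) < 1 - ε / 2 := by linarith
    have h4 : (0:ℝ) < 1 + ε / 2 := by linarith
    have hEle : E ≤ 1 / (1 - ε / 2) := by
      rw [le_div_iff₀ h3]
      calc E * (1 - ε / 2) ≤ E * E' := mul_le_mul_of_nonneg_left h1 hE0.le
        _ = 1 := hEE
    have hE'le : E' ≤ 1 / (1 + ε / 2) := by
      rw [le_div_iff₀ h4]
      calc E' * (1 + ε / 2) ≤ E' * E := mul_le_mul_of_nonneg_left h2 hE'0.le
        _ = 1 := by rw [mul_comm]; exact hEE
    have h5 : K ≤ 1 / (1 - ε / 2) + 1 / (1 + ε / 2) := by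
      rw [hK_def]; linarith
    have heq : 1 / (1 - ε / 2) + 1 / (1 + ε / 2) = 2 / (1 - (ε / 2) ^ 2) := by
      rw [div_add_div _ _ h3.ne' h4.ne']
      congr 1 <;> ring
    rw [heq] at h5
    have h6 : (2:ℝ) / (1 - (ε / 2) ^ 2) = 2 * (1 / (1 - (ε / 2) ^ 2)) := by
      rw [mul_one_div]
    rw [h6] at h5
    linarith only [h5]
  have hs2pos : (0:ℝ) < 1 - (ε / 2) ^ 2 := by nlinarith only [hε, hε1]
  have hana : (1 - ε ^ 2) * (K / 2) ^ 2 ≤ c ^ 2 := by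
    have hε2 : 1 - ε ^ 2 = 1 - 4 * (ε / 2) ^ 2 := by ring
    rw [hε2]
    have hK2 : (0:ℝ) ≤ K / 2 := by linarith only [hK_pos]
    have h1 : (K / 2) ^ 2 ≤ (1 / (1 - (ε / 2) ^ 2)) ^ 2 :=
      pow_le_pow_left₀ hK2 hKle 2
    have h2 : (1 - 4 * (ε / 2) ^ 2) * (1 / (1 - (ε / 2) ^ 2)) ^ 2
        ≤ (1 - (ε / 2) ^ 2 / 2) ^ 2 := by
      rw [div_pow 1 (1 - (ε / 2) ^ 2) 2, one_pow, mul_one_div, div_le_iff₀ (by positivity)]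
      have hu : (0:ℝ) ≤ (ε / 2) ^ 2 := sq_nonneg _
      have hu1 : (ε / 2) ^ 2 ≤ 1 / 4 := by nlinarith only [hε, hε1]
      have hu3 : (0:ℝ) ≤ (ε / 2) ^ 2 * (ε / 2) ^ 2 * (1 / 4 - (ε / 2) ^ 2) :=
        mul_nonneg (mul_nonneg hu hu) (by linarith only [hu1])
      nlinarith only [hu, hu1, hu3, sq_nonneg ((ε / 2) ^ 2)]
    have h4s : (0:ℝ) ≤ 1 - 4 * (ε / 2) ^ 2 := by nlinarith only [hε, hε1]
    have hcp : (0:ℝ) ≤ 1 - (ε / 2) ^ 2 / 2 := by nlinarith only [hε, hε1]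
    have hcos2 : (1 - (ε / 2) ^ 2 / 2) ^ 2 ≤ c ^ 2 :=
      pow_le_pow_left₀ hcp hcos_lb 2
    calc (1 - 4 * (ε / 2) ^ 2) * (K / 2) ^ 2
        ≤ (1 - 4 * (ε / 2) ^ 2) * (1 / (1 - (ε / 2) ^ 2)) ^ 2 :=
          mul_le_mul_of_nonneg_left h1 h4s
      _ ≤ (1 - (ε / 2) ^ 2 / 2) ^ 2 := h2
      _ ≤ c ^ 2 := hcos2
  -- final assembly
  rw [le_div_iff₀ (mul_pos hSa_pos hSb_pos)]
  have hfin1 : (1 - ε ^ 2) * (Sa * Sb) ≤ (1 - ε ^ 2) * ((K / 2) ^ 2 * S ^ 2) := by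
    have h4s : (0:ℝ) ≤ 1 - ε ^ 2 := by nlinarith only [hε, hε1]
    exact mul_le_mul_of_nonneg_left hprod h4s
  have hfin2 : ((1 - ε ^ 2) * (K / 2) ^ 2) * S ^ 2 ≤ c ^ 2 * S ^ 2 :=
    mul_le_mul_of_nonneg_right hana (sq_nonneg S)
  have hfin3 : (c * S) ^ 2 ≤ N ^ 2 := by
    have h6 : (0:ℝ) ≤ c * S := (mul_pos hcos_pos hS_pos).le
    nlinarith only [hN_ge, h6]
  calc (1 - ε ^ 2) * (Sa * Sb)
      ≤ (1 - ε ^ 2) * ((K / 2) ^ 2 * S ^ 2) := hfin1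
    _ = ((1 - ε ^ 2) * (K / 2) ^ 2) * S ^ 2 := by ring
    _ ≤ c ^ 2 * S ^ 2 := hfin2
    _ = (c * S) ^ 2 := by ring
    _ ≤ N ^ 2 := hfin3
end

section
/- Let α₀, α₁ ∈ ℂ with |α₀|² + |α₁|² = 1, and define the probability distribution π on {0,1}^n by π(x) = |α₀ + α₁|²/2^n if x has even Hamming weight and π(x) = |α₀ − α₁|²/2^n if x has odd Hamming weight. Set α_max = max(|α₀ + α₁|², |α₀ − α₁|²) and α_min = min(|α₀ + α₁|², |α₀ − α₁|²), and assume α_min > 0. Let P be the level-1 transition matrix: P(x,y) = (1/n)·π(y)/(π(x)+π(y)) if d(x,y) = 1, P(x,x) = (1/n)·∑_{x' : d(x,x')=1} π(x)/(π(x)+π(x')), and P(x,y) = 0 otherwise, and set Q(e) = π(e⁺)P(e⁺,e⁻) for a directed edge e = (e⁺,e⁻). Then there is a universal constant C > 0 and a set of canonical paths Γ = {γ_xy} in the hypercube whose congestion ρ(Γ) = max_e (1/Q(e)) · ∑_{(x,y) : e ∈ γ_xy} π(x)π(y)·|γ_xy| satisfies ρ(Γ) ≤ C·n²·α_max²/α_min.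 -/
open Finset
open scoped Classical

namespace Stmt16
variable {n : ℕ}
def diffSet (x y : Fin n → Bool) : Finset (Fin n) :=
  Finset.univ.filter fun i => x i ≠ y i
lemma hd_eq (x y : Fin n → Bool) : hammingDist x y = (diffSet x y).card := rfl
lemma mem_diffSet {x y : Fin n → Bool} {j : Fin n} : j ∈ diffSet x y ↔ x j ≠ y j := by
  simp [diffSet]
lemma diffSet_nonempty {x y : Fin n → Bool} (h : x ≠ y) : (diffSet x y).Nonempty := by
  by_contra hc; apply h; funext j; by_contra hj
  exact hc ⟨j, mem_diffSet.2 hj⟩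
lemma diffSet_update {x y : Fin n → Bool} {i : Fin n} :
    diffSet (Function.update x i (y i)) y = (diffSet x y).erase i := by
  ext j
  simp only [mem_diffSet, Finset.mem_erase]
  rcases eq_or_ne j i with rfl | hj
  · simp [Function.update_self]
  · simp [Function.update_of_ne hj, hj, mem_diffSet]
lemma diffSet_single {x y : Fin n → Bool} {i : Fin n} (hi : x i ≠ y i) :
    diffSet x (Function.update x i (y i)) = {i} := by
  ext j
  simp only [mem_diffSet, Finset.mem_singleton]
  rcases eq_or_ne j i with rfl | hj
  · simp [Function.update_self, hi]
  · simp [Function.update_of_ne hj, hj]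
lemma adj_update {x y : Fin n → Bool} {i : Fin n} (hi : x i ≠ y i) :
    (cubeGraph n).Adj x (Function.update x i (y i)) := by
  show hammingDist _ _ = 1
  rw [hd_eq, diffSet_single hi, Finset.card_singleton]
lemma hd_update_lt {x y : Fin n → Bool} {i : Fin n} (hi : x i ≠ y i) :
    hammingDist (Function.update x i (y i)) y < hammingDist x y := by
  rw [hd_eq, hd_eq, diffSet_update]
  exact Finset.card_erase_lt_of_mem (mem_diffSet.2 hi)
noncomputable def pathFrom : ∀ x y : Fin n → Bool, (cubeGraph n).Walk x y
  | x, y =>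
    if h : x = y then h ▸ SimpleGraph.Walk.nil
    else
      have hne := diffSet_nonempty h
      have hi : x ((diffSet x y).min' hne) ≠ y ((diffSet x y).min' hne) :=
        (Finset.mem_filter.1 ((diffSet x y).min'_mem hne)).2
      SimpleGraph.Walk.cons (adj_update hi)
        (pathFrom (Function.update x ((diffSet x y).min' hne) (y ((diffSet x y).min' hne))) y)
  termination_by x y => hammingDist x y
  decreasing_by exact hd_update_lt hi

lemma pathFrom_length (x y : Fin n → Bool) : (pathFrom x y).length = hammingDist x y := by
  induction x, y using pathFrom.induct with
  | case1 y => rw [pathFrom]; simp [hammingDist_self]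
  | case2 x y h hne hi ih =>
    rw [pathFrom, dif_neg h]
    simp only [SimpleGraph.Walk.length_cons, ih]
    rw [hd_eq, hd_eq, diffSet_update, Finset.card_erase_of_mem ((diffSet x y).min'_mem hne)]
    have h1 : 1 ≤ (diffSet x y).card := Finset.card_pos.2 hne
    omega

lemma pathFrom_support (x y : Fin n → Bool) :
    ∀ v ∈ (pathFrom x y).support, hammingDist v y ≤ hammingDist x y := by
  induction x, y using pathFrom.induct with
  | case1 y => rw [pathFrom]; simp [hammingDist_self]
  | case2 x y h hne hi ih =>
    rw [pathFrom, dif_neg h]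
    intro v hv
    rw [SimpleGraph.Walk.support_cons, List.mem_cons] at hv
    rcases hv with rfl | hv
    · exact le_rfl
    · exact (ih v hv).trans (hd_update_lt hi).le

lemma pathFrom_isPath (x y : Fin n → Bool) : (pathFrom x y).IsPath := by
  induction x, y using pathFrom.induct with
  | case1 y => rw [pathFrom]; simp
  | case2 x y h hne hi ih =>
    rw [pathFrom, dif_neg h]
    refine ih.cons ?_
    intro hx
    have := pathFrom_support _ y x hx
    exact absurd this (not_le.2 (hd_update_lt hi))

lemma pathFrom_darts (x y : Fin n → Bool) :
    ∀ d ∈ (pathFrom x y).darts, ∀ i : Fin n, d.toProd.1 i ≠ d.toProd.2 i →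
      (∀ j, i ≤ j → d.toProd.1 j = x j) ∧ (∀ j, j ≤ i → d.toProd.2 j = y j) := by
  induction x, y using pathFrom.induct with
  | case1 y => rw [pathFrom]; simp
  | case2 x y h hne hi ih =>
    set i₀ := (diffSet x y).min' hne with hi₀
    rw [pathFrom, dif_neg h]
    intro d hd i hdi
    rw [SimpleGraph.Walk.darts_cons, List.mem_cons] at hd
    rcases hd with rfl | hd
    · have hii : i = i₀ := by
        by_contra hne'
        exact hdi (Function.update_of_ne hne' _ _).symm
      refine ⟨fun j hj => rfl, fun j hj => ?_⟩
      show Function.update x i₀ (y i₀) j = y j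
      rcases eq_or_ne j i₀ with rfl | hj'
      · simp [Function.update_self]
      · rw [Function.update_of_ne hj']
        by_contra hxy
        have hle : i₀ ≤ j := (diffSet x y).min'_le j (mem_diffSet.2 hxy)
        exact hj' (le_antisymm (hii ▸ hj) hle)
    · obtain ⟨h1, h2⟩ := ih d hd i hdi
      have hx'y : Function.update x i₀ (y i₀) i ≠ y i := by
        rw [← h1 i le_rfl, ← h2 i le_rfl]; exact hdi
      have hmem : i ∈ (diffSet x y).erase i₀ := by
        rw [← diffSet_update]; exact mem_diffSet.2 hx'y
      have hlt : i₀ < i :=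
        lt_of_le_of_ne ((diffSet x y).min'_le i (Finset.mem_erase.1 hmem).2)
          (Ne.symm (Finset.mem_erase.1 hmem).1)
      refine ⟨fun j hj => ?_, h2⟩
      rw [h1 j hj, Function.update_of_ne]
      exact fun hji => absurd (hji ▸ hj) (not_le.2 hlt)

lemma card_le {e₁ e₂ : Fin n → Bool} {i : Fin n} (hi : e₁ i ≠ e₂ i) :
    (Finset.univ.filter fun p : (Fin n → Bool) × (Fin n → Bool) =>
      p.1 ≠ p.2 ∧ ∃ d ∈ (pathFrom p.1 p.2).darts, d.toProd = (e₁, e₂)).card ≤ 2 ^ (n - 1) := by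
  have hcard : Fintype.card ({j : Fin n // j ≠ i} → Bool) = 2 ^ (n - 1) := by
    simp [Fintype.card_fun, Fintype.card_subtype_compl]
  rw [← hcard, ← Finset.card_univ]
  apply Finset.card_le_card_of_injOn
    (fun p => fun j : {j : Fin n // j ≠ i} => if (j : Fin n) < i then p.1 j else p.2 j)
    (fun _ _ => Finset.mem_univ _)
  intro p hp q hq hpq
  -- extract structure for p and q
  have extract : ∀ r : (Fin n → Bool) × (Fin n → Bool),
      r ∈ (Finset.univ.filter fun p : (Fin n → Bool) × (Fin n → Bool) =>
        p.1 ≠ p.2 ∧ ∃ d ∈ (pathFrom p.1 p.2).darts, d.toProd = (e₁, e₂)) →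
      (∀ j, i ≤ j → e₁ j = r.1 j) ∧ (∀ j, j ≤ i → e₂ j = r.2 j) := by
    intro r hr
    obtain ⟨-, d, hd, hde⟩ := (Finset.mem_filter.1 hr).2
    have hd1 : d.toProd.1 = e₁ := congrArg Prod.fst hde
    have hd2 : d.toProd.2 = e₂ := congrArg Prod.snd hde
    have := pathFrom_darts r.1 r.2 d hd i (by rw [hd1, hd2]; exact hi)
    rw [hd1, hd2] at this
    exact this
  obtain ⟨hp1, hp2⟩ := extract p hp
  obtain ⟨hq1, hq2⟩ := extract q hq
  have hpq' : ∀ j : Fin n, j ≠ i →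
      (if j < i then p.1 j else p.2 j) = (if j < i then q.1 j else q.2 j) :=
    fun j hj => congrFun hpq ⟨j, hj⟩
  ext1
  · funext j
    rcases lt_or_ge j i with hj | hj
    · have := hpq' j (ne_of_lt hj)
      rwa [if_pos hj, if_pos hj] at this
    · rw [← hp1 j hj, ← hq1 j hj]
  · funext j
    rcases le_or_gt j i with hj | hj
    · rw [← hp2 j hj, ← hq2 j hj]
    · have := hpq' j (ne_of_gt hj)
      rwa [if_neg (not_lt.2 hj.le), if_neg (not_lt.2 hj.le)] at this

end Stmt16

/-- For the measurement distribution of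
`H^{⊗n}(α₀|0…0⟩ + α₁|1…1⟩)` — which assigns `|α₀+α₁|²/2ⁿ` to even-weight strings and
`|α₀-α₁|²/2ⁿ` to odd-weight strings — there is a universal constant `C > 0` and a set of
canonical simple paths in the hypercube whose congestion is at most
`C n² α_max²/α_min`. -/
theorem stmt_16 :
    ∃ C > (0 : ℝ), ∀ n : ℕ, 1 ≤ n → ∀ α₀ α₁ : ℂ,
      ‖α₀‖ ^ 2 + ‖α₁‖ ^ 2 = 1 →
      ∀ π : (Fin n → Bool) → ℝ,
      (∀ x, π x = if Even ((Finset.univ.filter fun i => x i).card)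
        then ‖α₀ + α₁‖ ^ 2 / 2 ^ n
        else ‖α₀ - α₁‖ ^ 2 / 2 ^ n) →
      ∀ αmax αmin : ℝ,
      αmax = max (‖α₀ + α₁‖ ^ 2) (‖α₀ - α₁‖ ^ 2) →
      αmin = min (‖α₀ + α₁‖ ^ 2) (‖α₀ - α₁‖ ^ 2) →
      0 < αmin →
      ∃ γ : ∀ x y : Fin n → Bool, (cubeGraph n).Walk x y,
        (∀ x y : Fin n → Bool, x ≠ y → (γ x y).IsPath) ∧
        ∀ e₁ e₂ : Fin n → Bool, hammingDist e₁ e₂ = 1 →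
          (∑ x, ∑ y,
            if x ≠ y ∧ (∃ d ∈ (γ x y).darts, d.toProd = (e₁, e₂)) then
              π x * π y * ((γ x y).length : ℝ)
            else 0) /
          (π e₁ * (1 / (n : ℝ) * (π e₂ / (π e₁ + π e₂)))) ≤
          C * (n : ℝ) ^ 2 * αmax ^ 2 / αmin := by
  refine ⟨2, by norm_num, ?_⟩
  intro n hn α₀ α₁ hnorm π hπ αmax αmin hmax hmin hminpos
  refine ⟨Stmt16.pathFrom, fun x y _ => Stmt16.pathFrom_isPath x y, ?_⟩
  intro e₁ e₂ hd
  -- basic facts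
  have hn0 : (0 : ℝ) < n := by exact_mod_cast hn
  have hP : (0 : ℝ) < 2 ^ n := by positivity
  have hminmax : αmin ≤ αmax := by rw [hmax, hmin]; exact min_le_max
  have hmaxpos : 0 < αmax := lt_of_lt_of_le hminpos hminmax
  have hπub : ∀ v, π v ≤ αmax / 2 ^ n := by
    intro v
    rw [hπ v, hmax]
    split_ifs
    · exact div_le_div_of_nonneg_right (le_max_left _ _) hP.le
    · exact div_le_div_of_nonneg_right (le_max_right _ _) hP.le
  have hπlb : ∀ v, αmin / 2 ^ n ≤ π v := by
    intro v
    rw [hπ v, hmin]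
    split_ifs
    · exact div_le_div_of_nonneg_right (min_le_left _ _) hP.le
    · exact div_le_div_of_nonneg_right (min_le_right _ _) hP.le
  have hπpos : ∀ v, 0 < π v := fun v => lt_of_lt_of_le (by positivity) (hπlb v)
  -- index where e₁, e₂ differ
  have hne : e₁ ≠ e₂ := by
    intro h
    rw [h, hammingDist_self] at hd
    omega
  obtain ⟨i, hi⟩ : ∃ i, e₁ i ≠ e₂ i := by
    obtain ⟨i, hi⟩ := Stmt16.diffSet_nonempty hne
    exact ⟨i, Stmt16.mem_diffSet.1 hi⟩
  -- numerator bound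
  set B : ℝ := αmax / 2 ^ n * (αmax / 2 ^ n) * n with hB
  set num : ℝ := ∑ x, ∑ y,
      if x ≠ y ∧ (∃ d ∈ (Stmt16.pathFrom x y).darts, d.toProd = (e₁, e₂)) then
        π x * π y * ((Stmt16.pathFrom x y).length : ℝ)
      else 0 with hnum
  have hBpos : 0 ≤ B := by positivity
  have hlen : ∀ x y : Fin n → Bool, ((Stmt16.pathFrom x y).length : ℝ) ≤ n := by
    intro x y
    rw [Stmt16.pathFrom_length]
    exact_mod_cast (hammingDist_le_card_fintype (x := x) (y := y)).trans (by simp)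
  have hnum_le : num ≤ 2 ^ (n - 1) * B := by
    have step1 : num ≤ ∑ x, ∑ y,
        if x ≠ y ∧ (∃ d ∈ (Stmt16.pathFrom x y).darts, d.toProd = (e₁, e₂)) then B else 0 := by
      rw [hnum]
      refine Finset.sum_le_sum fun x _ => Finset.sum_le_sum fun y _ => ?_
      split_ifs
      · rw [hB]
        exact mul_le_mul
          (mul_le_mul (hπub x) (hπub y) (hπpos y).le (by positivity))
          (hlen x y) (Nat.cast_nonneg _) (by positivity)
      · exact le_rfl
    have step2 : (∑ x, ∑ y,
        if x ≠ y ∧ (∃ d ∈ (Stmt16.pathFrom x y).darts, d.toProd = (e₁, e₂)) then B else 0)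
        = ((Finset.univ.filter fun p : (Fin n → Bool) × (Fin n → Bool) =>
            p.1 ≠ p.2 ∧ ∃ d ∈ (Stmt16.pathFrom p.1 p.2).darts, d.toProd = (e₁, e₂)).card : ℝ) * B := by
      rw [← Finset.sum_product', Finset.univ_product_univ]
      rw [Finset.sum_ite, Finset.sum_const, Finset.sum_const_zero, add_zero, nsmul_eq_mul]
    have step3 : ((Finset.univ.filter fun p : (Fin n → Bool) × (Fin n → Bool) =>
            p.1 ≠ p.2 ∧ ∃ d ∈ (Stmt16.pathFrom p.1 p.2).darts, d.toProd = (e₁, e₂)).card : ℝ)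
        ≤ 2 ^ (n - 1) := by
      have := Stmt16.card_le hi
      exact_mod_cast this
    calc num ≤ _ := step1
      _ = _ := step2
      _ ≤ 2 ^ (n - 1) * B := mul_le_mul_of_nonneg_right step3 hBpos
  -- denominator bound
  set m : ℝ := αmin / 2 ^ n with hm
  have hmpos : 0 < m := by rw [hm]; positivity
  set D : ℝ := π e₁ * (1 / (n : ℝ) * (π e₂ / (π e₁ + π e₂))) with hD
  have hp1 := hπpos e₁
  have hp2 := hπpos e₂
  have hs : 0 < π e₁ + π e₂ := by linarith
  have hharm : m / 2 ≤ π e₁ * π e₂ / (π e₁ + π e₂) := by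
    rw [div_le_div_iff₀ (by norm_num) hs]
    have h1 : m ≤ π e₁ := by rw [hm]; exact hπlb e₁
    have h2 : m ≤ π e₂ := by rw [hm]; exact hπlb e₂
    nlinarith
  have hD_eq : D = π e₁ * π e₂ / (π e₁ + π e₂) * (1 / n) := by
    rw [hD]; ring
  have hD_lb : m / (2 * n) ≤ D := by
    rw [hD_eq]
    have : m / (2 * n) = m / 2 * (1 / n) := by ring
    rw [this]
    exact mul_le_mul_of_nonneg_right hharm (by positivity)
  have hD'pos : (0 : ℝ) < m / (2 * n) := by positivity
  have hDpos : 0 < D := lt_of_lt_of_le hD'pos hD_lb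
  have hnum_nonneg : 0 ≤ num := by
    rw [hnum]
    refine Finset.sum_nonneg fun x _ => Finset.sum_nonneg fun y _ => ?_
    split_ifs with hc
    · have := hπpos x; have := hπpos y; positivity
    · exact le_rfl
  have hpow : (2 : ℝ) ^ (n - 1) = 2 ^ n / 2 := by
    rw [eq_div_iff (by norm_num : (2:ℝ) ≠ 0), ← pow_succ]
    congr 1
    omega
  have hfin : (2 : ℝ) ^ (n - 1) * B / (m / (2 * n)) = (n : ℝ) ^ 2 * αmax ^ 2 / αmin := by
    rw [hpow, hB, hm]
    field_simp
  calc num / D ≤ num / (m / (2 * n)) := by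
        apply div_le_div_of_nonneg_left hnum_nonneg hD'pos hD_lb
      _ ≤ (2 : ℝ) ^ (n - 1) * B / (m / (2 * n)) :=
        div_le_div_of_nonneg_right hnum_le hD'pos.le
      _ = (n : ℝ) ^ 2 * αmax ^ 2 / αmin := hfin
      _ ≤ 2 * (n : ℝ) ^ 2 * αmax ^ 2 / αmin := by
        apply div_le_div_of_nonneg_right _ hminpos.le
        nlinarith [pow_pos hn0 2, pow_pos hmaxpos 2]
end

section
/- Let π be a strictly positive probability distribution on {0,1}^n, φ : {0,1}^n → ℝ, and ψ(x) = √π(x)·e^{iφ(x)}. Let L be the level-1 observable: L(x,y) = (1/n)·(√(π(x)π(y))/(π(x)+π(y)))·e^{i(φ(x)−φ(y))} if d(x,y) = 1, L(x,x) = (1/n)·∑_{x' : d(x,x')=1} π(x)/(π(x)+π(x')), and L(x,y) = 0 otherwise. Set d = 2^n. Then Tr(L) = d/2, and for every F ∈ [0,1] the white-noise density matrix ρ_F = F·|ψ⟩⟨ψ| + (1−F)·I/d satisfies Tr(L·ρ_F) = (1 + F)/2. -/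
open Matrix Complex Finset


lemma hd_one_iff {n : ℕ} (x y : Fin n → Bool) :
    hammingDist x y = 1 ↔ ∃ i, y = Function.update x i (!(x i)) := by
  constructor
  · intro h
    rw [hammingDist, Finset.card_eq_one] at h
    obtain ⟨i, hi⟩ := h
    refine ⟨i, funext fun j => ?_⟩
    by_cases hj : j = i
    · subst hj
      have : j ∈ ({j} : Finset (Fin n)) := Finset.mem_singleton_self j
      rw [← hi, Finset.mem_filter] at this
      simp [Function.update_self]
      cases hxy : x j <;> cases hyy : y j <;> simp_all
    · have : j ∉ ({i} : Finset (Fin n)) := by simp [hj]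
      rw [← hi, Finset.mem_filter] at this
      push_neg at this
      have := this (Finset.mem_univ j)
      simp [Function.update_of_ne hj, this]
  · rintro ⟨i, rfl⟩
    rw [hammingDist]
    have : ({j | x j ≠ Function.update x i (!(x i)) j} : Finset (Fin n)) = {i} := by
      ext j
      by_cases hj : j = i
      · subst hj; simp
      · simp [Function.update_of_ne hj, hj]
    rw [this, Finset.card_singleton]

lemma card_neighbors {n : ℕ} (x : Fin n → Bool) :
    (Finset.univ.filter (fun y => hammingDist x y = 1)).card = n := by
  have hset : (Finset.univ.filter (fun y => hammingDist x y = 1)) =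
      Finset.univ.image (fun i => Function.update x i (!(x i))) := by
    ext y
    simp only [Finset.mem_filter, Finset.mem_univ, true_and, Finset.mem_image]
    rw [hd_one_iff]
    constructor
    · rintro ⟨i, rfl⟩; exact ⟨i, rfl⟩
    · rintro ⟨i, rfl⟩; exact ⟨i, rfl⟩
  rw [hset, Finset.card_image_of_injective _ ?_, Finset.card_univ, Fintype.card_fin]
  intro i j hij
  by_contra hne
  have := congrFun hij i
  simp only [Function.update_self, Function.update_of_ne, hne, Ne.symm hne] at this
  rw [Function.update_of_ne hne] at this
  exact (Bool.not_ne_self (x i)) this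

lemma key_swap {n : ℕ} (f : (Fin n → Bool) → (Fin n → Bool) → ℝ) :
    ∑ x, ∑ y, (if hammingDist x y = 1 then f x y else 0)
      = ∑ x, ∑ y, (if hammingDist x y = 1 then f y x else 0) := by
  rw [Finset.sum_comm]
  refine Finset.sum_congr rfl fun x _ => Finset.sum_congr rfl fun y _ => ?_
  rw [hammingDist_comm]

lemma sum_ite_const {n : ℕ} (x : Fin n → Bool) (c : ℝ) :
    ∑ y, (if hammingDist x y = 1 then c else 0) = c * n := by
  rw [← Finset.sum_filter, Finset.sum_const, card_neighbors, nsmul_eq_mul, mul_comm]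

lemma pair_combine {n : ℕ} (f g : (Fin n → Bool) → (Fin n → Bool) → ℝ)
    (h : (Fin n → Bool) → ℝ)
    (hfg : ∀ x y : Fin n → Bool, hammingDist x y = 1 → f x y + g x y = h x) :
    (∑ x, ∑ y, (if hammingDist x y = 1 then f x y else 0))
      + (∑ x, ∑ y, (if hammingDist x y = 1 then g x y else 0))
      = (∑ x : Fin n → Bool, h x) * n := by
  have h1 : (∑ x, ∑ y, (if hammingDist x y = 1 then f x y else 0))
      + (∑ x, ∑ y, (if hammingDist x y = 1 then g x y else 0))
      = ∑ x, ∑ y, (if hammingDist x y = 1 then h x else (0:ℝ)) := by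
    rw [← Finset.sum_add_distrib]
    refine Finset.sum_congr rfl fun x _ => ?_
    rw [← Finset.sum_add_distrib]
    refine Finset.sum_congr rfl fun y _ => ?_
    by_cases hc : hammingDist x y = 1
    · simp [hc, hfg x y hc]
    · simp [hc]
  rw [h1, Finset.sum_congr rfl (fun x _ => sum_ite_const x (h x)), ← Finset.sum_mul]

lemma hS {n : ℕ} (π : (Fin n → Bool) → ℝ) (hπpos : ∀ x, 0 < π x) :
    ∑ x, ∑ y, (if hammingDist x y = 1 then π x / (π x + π y) else 0)
      = (n : ℝ) * 2 ^ n / 2 := by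
  set S := ∑ x, ∑ y, (if hammingDist x y = 1 then π x / (π x + π y) else (0:ℝ)) with hSdef
  have hsw : S = ∑ x, ∑ y, (if hammingDist x y = 1 then π y / (π y + π x) else (0:ℝ)) :=
    key_swap _
  have h2 : S + S = (n : ℝ) * 2 ^ n := by
    nth_rewrite 2 [hsw]
    have := pair_combine (fun x y => π x / (π x + π y)) (fun x y => π y / (π y + π x))
      (fun _ => (1:ℝ)) (fun x y _ => by
        have hx := hπpos x; have hy := hπpos y
        have hxy : π x + π y ≠ 0 := by positivity
        field_simp
        ring)
    rw [this, Finset.sum_const, Finset.card_univ]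
    simp [mul_comm]
  linarith

/-- For the level-1 shadow-overlap observable `L` of the state
`ψ(x) = √π(x) e^{iφ(x)}` (with `π > 0`), we have `Tr(L) = d/2` where `d = 2ⁿ`, and for
the white-noise state `ρ_F = F|ψ⟩⟨ψ| + (1-F)·I/d` the expected shadow overlap is
`Tr(L ρ_F) = (1+F)/2`. -/
theorem stmt_18 (n : ℕ) (hn : 1 ≤ n)
    (π : (Fin n → Bool) → ℝ) (hπpos : ∀ x, 0 < π x) (hπsum : ∑ x, π x = 1)
    (φ : (Fin n → Bool) → ℝ)
    (ψ : (Fin n → Bool) → ℂ)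
    (hψ : ∀ x, ψ x = (Real.sqrt (π x) : ℝ) * Complex.exp (Complex.I * (φ x : ℝ)))
    (L : Matrix (Fin n → Bool) (Fin n → Bool) ℂ)
    (hLoff : ∀ x y, hammingDist x y = 1 →
      L x y = ((1 / (n : ℝ) * (Real.sqrt (π x * π y) / (π x + π y)) : ℝ) : ℂ) *
        Complex.exp (Complex.I * ((φ x - φ y : ℝ) : ℂ)))
    (hLdiag : ∀ x, L x x = ((1 / (n : ℝ) *
      ∑ x' ∈ Finset.univ.filter (fun x' => hammingDist x x' = 1),
        π x / (π x + π x') : ℝ) : ℂ))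
    (hLfar : ∀ x y, x ≠ y → hammingDist x y ≠ 1 → L x y = 0)
    (F : ℝ) (hF0 : 0 ≤ F) (hF1 : F ≤ 1)
    (d : ℕ) (hd : d = 2 ^ n)
    (ρF : Matrix (Fin n → Bool) (Fin n → Bool) ℂ)
    (hρF : ρF = (F : ℂ) • Matrix.vecMulVec ψ (star ψ) +
      (((1 - F) / (d : ℝ) : ℝ) : ℂ) • (1 : Matrix (Fin n → Bool) (Fin n → Bool) ℂ)) :
    L.trace = ((d : ℝ) / 2 : ℝ) ∧ (L * ρF).trace = (((1 + F) / 2 : ℝ) : ℂ) := by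
  have hnR : (n : ℝ) ≠ 0 := by positivity
  -- the real diagonal value
  set T : (Fin n → Bool) → ℝ := fun x =>
    1 / (n : ℝ) * ∑ x' ∈ Finset.univ.filter (fun x' => hammingDist x x' = 1),
      π x / (π x + π x') with hT
  -- Part 1: trace
  have htr : L.trace = (((d : ℝ) / 2 : ℝ) : ℂ) := by
    rw [Matrix.trace]
    have : ∀ x, L.diag x = ((T x : ℝ) : ℂ) := fun x => hLdiag x
    rw [Finset.sum_congr rfl (fun x _ => this x), ← Complex.ofReal_sum]
    congr 1
    have hTsum : ∑ x, T x = (d : ℝ) / 2 := by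
      have : ∑ x, T x = 1 / (n:ℝ) *
          ∑ x, ∑ y, (if hammingDist x y = 1 then π x / (π x + π y) else 0) := by
        rw [Finset.mul_sum]
        refine Finset.sum_congr rfl fun x _ => ?_
        simp only [hT]
        rw [Finset.sum_filter]
      rw [this, hS π hπpos, hd]
      push_cast
      field_simp
    exact hTsum
  refine ⟨htr, ?_⟩
  -- conjugate of ψ
  have hψconj : ∀ x, (starRingEnd ℂ) (ψ x) =
      ((Real.sqrt (π x) : ℝ) : ℂ) * Complex.exp (-(Complex.I * ((φ x : ℝ) : ℂ))) := by
    intro x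
    rw [hψ, _root_.map_mul, Complex.conj_ofReal, ← Complex.exp_conj, _root_.map_mul,
      Complex.conj_I, Complex.conj_ofReal, neg_mul]
  have hprod : ∀ x y, ψ y * (starRingEnd ℂ) (ψ x) =
      ((Real.sqrt (π y) * Real.sqrt (π x) : ℝ) : ℂ) *
        Complex.exp (Complex.I * (((φ y - φ x : ℝ)) : ℂ)) := by
    intro x y
    rw [hψ, hψconj]
    have he : Complex.exp (Complex.I * ((φ y : ℝ) : ℂ)) *
        Complex.exp (-(Complex.I * ((φ x : ℝ) : ℂ)))
        = Complex.exp (Complex.I * (((φ y - φ x : ℝ)) : ℂ)) := by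
      rw [← Complex.exp_add]
      congr 1
      push_cast
      ring
    rw [Complex.ofReal_mul, ← he]
    ring
  -- the per-term identity
  have hterm : ∀ x y, L x y * (ψ y * (starRingEnd ℂ) (ψ x)) =
      (((if y = x then π x * T x else 0)
        + (if hammingDist x y = 1 then
            1 / (n:ℝ) * (π x * π y / (π x + π y)) else 0) : ℝ) : ℂ) := by
    intro x y
    by_cases hxy : y = x
    · subst hxy
      have hd0 : hammingDist y y = 0 := hammingDist_self y
      have : ¬ hammingDist y y = 1 := by omega
      rw [hLdiag, hprod, if_pos rfl, if_neg this, sub_self, Complex.ofReal_zero,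
        mul_zero, Complex.exp_zero, mul_one, add_zero, ← Complex.ofReal_mul]
      congr 1
      rw [Real.mul_self_sqrt (hπpos y).le]
      simp only [hT]
      ring
    · by_cases hd1 : hammingDist x y = 1
      · rw [hLoff x y hd1, hprod, if_neg hxy, if_pos hd1]
        have he : Complex.exp (Complex.I * (((φ x - φ y : ℝ)) : ℂ)) *
            Complex.exp (Complex.I * (((φ y - φ x : ℝ)) : ℂ)) = 1 := by
          rw [← Complex.exp_add, ← Complex.exp_zero]
          congr 1
          push_cast
          ring
        have hsq : Real.sqrt (π x * π y) * (Real.sqrt (π y) * Real.sqrt (π x))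
            = π x * π y := by
          rw [Real.sqrt_mul (hπpos x).le]
          rw [show Real.sqrt (π x) * Real.sqrt (π y) * (Real.sqrt (π y) * Real.sqrt (π x))
            = (Real.sqrt (π x) * Real.sqrt (π x)) * (Real.sqrt (π y) * Real.sqrt (π y)) by ring]
          rw [Real.mul_self_sqrt (hπpos x).le, Real.mul_self_sqrt (hπpos y).le]
        calc ((1 / (n : ℝ) * (Real.sqrt (π x * π y) / (π x + π y)) : ℝ) : ℂ) *
              Complex.exp (Complex.I * ((φ x - φ y : ℝ) : ℂ)) *
              (((Real.sqrt (π y) * Real.sqrt (π x) : ℝ) : ℂ) *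
                Complex.exp (Complex.I * (((φ y - φ x : ℝ)) : ℂ)))
            = (((1 / (n : ℝ) * (Real.sqrt (π x * π y) / (π x + π y))) *
                (Real.sqrt (π y) * Real.sqrt (π x)) : ℝ) : ℂ) *
              (Complex.exp (Complex.I * ((φ x - φ y : ℝ) : ℂ)) *
                Complex.exp (Complex.I * (((φ y - φ x : ℝ)) : ℂ))) := by
              push_cast; ring
          _ = (((1 / (n : ℝ) * (Real.sqrt (π x * π y) / (π x + π y))) *
                (Real.sqrt (π y) * Real.sqrt (π x)) : ℝ) : ℂ) := by rw [he, mul_one]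
          _ = _ := by
              rw [zero_add]
              congr 1
              rw [show 1 / (n : ℝ) * (Real.sqrt (π x * π y) / (π x + π y)) *
                  (Real.sqrt (π y) * Real.sqrt (π x))
                = 1 / (n : ℝ) * ((Real.sqrt (π x * π y) * (Real.sqrt (π y) * Real.sqrt (π x)))
                    / (π x + π y)) by ring, hsq]
      · rw [hLfar x y (fun h => hxy h.symm) hd1, if_neg hxy, if_neg hd1, zero_mul]
        norm_num
  -- the quadratic form sums to 1
  have hQc : (L * Matrix.vecMulVec ψ (star ψ)).trace = 1 := by
    rw [Matrix.trace]
    have hdiag : ∀ x, (L * Matrix.vecMulVec ψ (star ψ)).diag x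
        = ∑ y, L x y * (ψ y * (starRingEnd ℂ) (ψ x)) := by
      intro x
      simp only [Matrix.diag, Matrix.mul_apply, Matrix.vecMulVec_apply, Pi.star_apply,
        Complex.star_def]
    rw [Finset.sum_congr rfl (fun x _ => hdiag x)]
    have : ∀ x, ∑ y, L x y * (ψ y * (starRingEnd ℂ) (ψ x))
        = (((π x * T x) + ∑ y, (if hammingDist x y = 1 then
            1 / (n:ℝ) * (π x * π y / (π x + π y)) else 0) : ℝ) : ℂ) := by
      intro x
      rw [Finset.sum_congr rfl (fun y _ => hterm x y)]
      rw [← Complex.ofReal_sum]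
      congr 1
      rw [Finset.sum_add_distrib, Finset.sum_ite_eq' Finset.univ x
        (fun y => π x * T x)]
      simp
    rw [Finset.sum_congr rfl (fun x _ => this x), ← Complex.ofReal_sum]
    rw [show (1 : ℂ) = ((1:ℝ) : ℂ) by norm_num]
    congr 1
    rw [Finset.sum_add_distrib]
    have hD : ∑ x, π x * T x
        = ∑ x, ∑ y, (if hammingDist x y = 1 then
            1 / (n:ℝ) * (π x * π x / (π x + π y)) else 0) := by
      refine Finset.sum_congr rfl fun x _ => ?_
      rw [hT]
      simp only
      rw [Finset.mul_sum, ← Finset.sum_filter, Finset.mul_sum]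
      refine Finset.sum_congr rfl fun y _ => ?_
      ring
    rw [hD]
    have := pair_combine (fun x y => 1 / (n:ℝ) * (π x * π x / (π x + π y)))
      (fun x y => 1 / (n:ℝ) * (π x * π y / (π x + π y)))
      (fun x => π x / n)
      (fun x y _ => by
        have hx := hπpos x; have hy := hπpos y
        have hxy : π x + π y ≠ 0 := by positivity
        field_simp)
    rw [this, ← Finset.sum_div, hπsum]
    field_simp
  -- assemble
  have hdR : (d : ℝ) ≠ 0 := by rw [hd]; positivity
  have hdC : ((d : ℝ) : ℂ) ≠ 0 := Complex.ofReal_ne_zero.mpr hdR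
  rw [hρF, Matrix.mul_add, Matrix.mul_smul, Matrix.mul_smul, Matrix.mul_one,
    Matrix.trace_add, Matrix.trace_smul, Matrix.trace_smul, hQc, htr]
  rw [smul_eq_mul, smul_eq_mul, mul_one]
  rw [show (((1 + F) / 2 : ℝ) : ℂ) = (F : ℂ) + ((1 - F : ℝ) : ℂ) / 2 by push_cast; ring]
  rw [show (((1 - F) / (d:ℝ) : ℝ) : ℂ) * (((d:ℝ)/2 : ℝ) : ℂ) = ((1-F:ℝ):ℂ) * (((d:ℝ):ℂ) / ((d:ℝ):ℂ)) / 2 by push_cast; ring]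
  rw [div_self hdC, mul_one]
end
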